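/- arXiv:2110.06488 — 13 statements merged into one kernel-verified Lean document; each statement's English description precedes it below -/
import Mathlib

section
/- Let P = {D_1,…,D_p} be the set of hyperplane-arrangement matrices of X. If the number m of hidden neurons satisfies m ≥ 2p, then the optimal value of the non-convex max-margin problem, namely the infimum over W_1 ∈ ℝ^{d×m} (with columns w_{1,i}) and w_2 ∈ ℝ^m of (1/2)(‖W_1‖_F² + ‖w_2‖₂²) subject to y_n · Σ_{i=1}^m (x_nᵀw_{1,i})_+ w_{2,i} ≥ 1 for all n ∈ {1,…,N}, equals the optimal value of the convex program: the infimum over u_1,…,u_p, u_1′,…,u_p′ ∈ ℝ^d of Σ_{j=1}^p (‖u_j‖₂ + ‖u_j′‖₂) subject to y_n Σ_{j=1}^p (D_j)_{nn} x_nᵀ(u_j′ − u_j) ≥ 1 for all n ∈ {1,…,N}, and (2D_j − I)Xu_j ≥ 0 and (2D_j − I)Xu_j′ ≥ 0 entrywise for all j ∈ {1,…,p}. -/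
open scoped BigOperators

noncomputable section

namespace MaxMarginAux

open Finset

variable {E : Type*} [NormedAddCommGroup E] [InnerProductSpace ℝ E]

/-- normalized weight vector for splitting a convex-program vector into a neuron. -/
noncomputable def nw (v : E) : E := (Real.sqrt ‖v‖)⁻¹ • v

lemma nw_normsq (v : E) : ‖nw v‖ ^ 2 = ‖v‖ := by
  by_cases h : v = 0
  · simp [nw, h]
  · have h0 : (0:ℝ) < ‖v‖ := norm_pos_iff.2 h
    have hs : Real.sqrt ‖v‖ ^ 2 = ‖v‖ := Real.sq_sqrt h0.le
    rw [nw, norm_smul, Real.norm_eq_abs, abs_inv,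
      abs_of_nonneg (Real.sqrt_nonneg _), mul_pow, inv_pow, hs]
    field_simp

lemma nw_max (x v : E) :
    max (inner ℝ x (nw v) : ℝ) 0 * Real.sqrt ‖v‖ = max (inner ℝ x v : ℝ) 0 := by
  by_cases h : v = 0
  · simp [nw, h]
  · have h0 : 0 < Real.sqrt ‖v‖ := Real.sqrt_pos.2 (norm_pos_iff.2 h)
    rw [nw, real_inner_smul_right]
    rw [show max ((Real.sqrt ‖v‖)⁻¹ * (inner ℝ x v : ℝ)) 0
        = (Real.sqrt ‖v‖)⁻¹ * max (inner ℝ x v : ℝ) 0 by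
      rw [mul_max_of_nonneg _ _ (inv_nonneg.2 h0.le), mul_zero]]
    field_simp

/-- Put `f` on indices `< p`, `g` on indices in `[p, 2p)`, `0` above. -/
def pick {M : Type*} [Zero M] (p : ℕ) (f g : Fin p → M) (k : ℕ) : M :=
  if h : k < p then f ⟨k, h⟩ else if h' : k - p < p ∧ p ≤ k then g ⟨k - p, h'.1⟩ else 0

lemma pick_map {M M' : Type*} [Zero M] [Zero M'] (F : M → M') (hF : F 0 = 0)
    (p : ℕ) (f g : Fin p → M) (k : ℕ) :
    F (pick p f g k) = pick p (fun J => F (f J)) (fun J => F (g J)) k := by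
  unfold pick; split_ifs <;> simp [hF]

lemma sum_pick_lo {M : Type*} [AddCommMonoid M] (p : ℕ) (f g : Fin p → M) :
    ∑ k ∈ Finset.range p, pick p f g k = ∑ J, f J := by
  rw [← Fin.sum_univ_eq_sum_range (pick p f g) p]
  exact Finset.sum_congr rfl fun i _ => by simp [pick, i.isLt]

lemma sum_pick {M : Type*} [AddCommMonoid M] {m p : ℕ} (hm : 2 * p ≤ m) (f g : Fin p → M) :
    ∑ i : Fin m, pick p f g i = (∑ J, f J) + ∑ J, g J := by
  rw [Fin.sum_univ_eq_sum_range]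
  have h1 : ∑ k ∈ Finset.range m, pick p f g k
      = ∑ k ∈ Finset.range (2 * p), pick p f g k := by
    refine (Finset.sum_subset (Finset.range_subset_range.2 hm) fun k _ hk => ?_).symm
    rw [Finset.mem_range, not_lt] at hk
    unfold pick
    rw [dif_neg (by omega), dif_neg (by omega)]
  rw [h1, two_mul, Finset.sum_range_add]
  congr 1
  · exact sum_pick_lo p f g
  · rw [← sum_pick_lo p g f]
    refine Finset.sum_congr rfl fun k hk => ?_
    rw [Finset.mem_range] at hk
    unfold pick
    rw [dif_neg (by omega), dif_pos ⟨by omega, by omega⟩, dif_pos hk]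
    have hpk : p + k - p = k := by omega
    congr 1
    exact Fin.ext (by simp only [hpk])

lemma ind_mul (t : ℝ) : (if 0 ≤ t then (1:ℝ) else 0) * t = max t 0 := by
  split_ifs with h
  · rw [one_mul, max_eq_left h]
  · rw [zero_mul]
    exact (max_eq_right (le_of_not_ge h)).symm

/-- Convex feasible point yields a nonconvex feasible point of identical value. -/
lemma key2 {N d m p : ℕ} (x : Fin N → EuclideanSpace ℝ (Fin d)) (y : Fin N → ℝ)
    (D : Fin p → Fin N → ℝ) (hD01 : ∀ j n, D j n = 0 ∨ D j n = 1) (hm : 2 * p ≤ m)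
    (u u' : Fin p → EuclideanSpace ℝ (Fin d))
    (hcon : ∀ n, 1 ≤ y n * ∑ j, D j n * (inner ℝ (x n) (u' j - u j) : ℝ))
    (hu : ∀ j n, 0 ≤ (2 * D j n - 1) * (inner ℝ (x n) (u j) : ℝ))
    (hu' : ∀ j n, 0 ≤ (2 * D j n - 1) * (inner ℝ (x n) (u' j) : ℝ)) :
    ∃ (W1 : Fin m → EuclideanSpace ℝ (Fin d)) (w2 : Fin m → ℝ),
      (∀ n, 1 ≤ y n * ∑ i, max (inner ℝ (x n) (W1 i) : ℝ) 0 * w2 i) ∧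
      (1 / 2) * ((∑ i, ‖W1 i‖ ^ 2) + ∑ i, (w2 i) ^ 2) = ∑ j, (‖u j‖ + ‖u' j‖) := by
  classical
  have hmax : ∀ (v : Fin p → EuclideanSpace ℝ (Fin d)),
      (∀ j n, 0 ≤ (2 * D j n - 1) * (inner ℝ (x n) (v j) : ℝ)) →
      ∀ j n, max (inner ℝ (x n) (v j) : ℝ) 0 = D j n * inner ℝ (x n) (v j) := by
    intro v hv j n
    rcases hD01 j n with h | h
    · have h2 := hv j n
      rw [h] at h2 ⊢
      rw [zero_mul]
      have ht : (inner ℝ (x n) (v j) : ℝ) ≤ 0 := by nlinarith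
      exact max_eq_right ht
    · have h2 := hv j n
      rw [h] at h2 ⊢
      rw [one_mul]
      have ht : (0:ℝ) ≤ inner ℝ (x n) (v j) := by nlinarith
      exact max_eq_left ht
  set W1 : Fin m → EuclideanSpace ℝ (Fin d) :=
    fun i => pick p (fun J => nw (u' J)) (fun J => nw (u J)) i with hW1
  set w2 : Fin m → ℝ :=
    fun i => pick p (fun J => Real.sqrt ‖u' J‖) (fun J => -Real.sqrt ‖u J‖) i with hw2
  refine ⟨W1, w2, ?_, ?_⟩
  · intro n
    have hterm : ∀ i : Fin m, max (inner ℝ (x n) (W1 i) : ℝ) 0 * w2 i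
        = pick p (fun J => D J n * (inner ℝ (x n) (u' J) : ℝ))
            (fun J => -(D J n * (inner ℝ (x n) (u J) : ℝ))) (i : ℕ) := by
      intro i
      simp only [hW1, hw2]
      unfold pick
      split_ifs with h1 h2
      · rw [nw_max, hmax u' hu' _ n]
      · rw [mul_neg, nw_max, hmax u hu _ n]
      · simp
    have hsum : ∑ i : Fin m, max (inner ℝ (x n) (W1 i) : ℝ) 0 * w2 i
        = ∑ j, D j n * (inner ℝ (x n) (u' j - u j) : ℝ) := by
      rw [Finset.sum_congr rfl fun i _ => hterm i, sum_pick hm]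
      simp only [inner_sub_right, mul_sub]
      rw [Finset.sum_sub_distrib]
      rw [Finset.sum_neg_distrib]
      ring
    rw [hsum]
    exact hcon n
  · have h1 : ∑ i : Fin m, ‖W1 i‖ ^ 2 = (∑ J, ‖u' J‖) + ∑ J, ‖u J‖ := by
      have hterm : ∀ i : Fin m, ‖W1 i‖ ^ 2
          = pick p (fun J => ‖u' J‖) (fun J => ‖u J‖) (i : ℕ) := by
        intro i
        simp only [hW1]
        have h := pick_map (fun v : EuclideanSpace ℝ (Fin d) => ‖v‖ ^ 2) (by simp)
          p (fun J => nw (u' J)) (fun J => nw (u J)) (i : ℕ)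
        simp only [nw_normsq] at h
        exact h
      rw [Finset.sum_congr rfl fun i _ => hterm i, sum_pick hm]
    have h2 : ∑ i : Fin m, (w2 i) ^ 2 = (∑ J, ‖u' J‖) + ∑ J, ‖u J‖ := by
      have hterm : ∀ i : Fin m, (w2 i) ^ 2
          = pick p (fun J => ‖u' J‖) (fun J => ‖u J‖) (i : ℕ) := by
        intro i
        simp only [hw2]
        have h := pick_map (fun t : ℝ => t ^ 2) (by simp)
          p (fun J => Real.sqrt ‖u' J‖) (fun J => -Real.sqrt ‖u J‖) (i : ℕ)
        simp only [neg_sq] at h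
        rw [h]
        congr 1 <;> funext J <;> exact Real.sq_sqrt (norm_nonneg _)
      rw [Finset.sum_congr rfl fun i _ => hterm i, sum_pick hm]
    rw [h1, h2, Finset.sum_add_distrib]
    ring

/-- Nonconvex feasible point yields a convex feasible point of no larger value. -/
lemma key1 {N d m p : ℕ} (x : Fin N → EuclideanSpace ℝ (Fin d)) (y : Fin N → ℝ)
    (D : Fin p → Fin N → ℝ)
    (hDall : ∀ w : EuclideanSpace ℝ (Fin d),
      ∃ j, ∀ n, D j n = if 0 ≤ (inner ℝ (x n) w : ℝ) then (1 : ℝ) else 0)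
    (W1 : Fin m → EuclideanSpace ℝ (Fin d)) (w2 : Fin m → ℝ)
    (hcon : ∀ n, 1 ≤ y n * ∑ i, max (inner ℝ (x n) (W1 i) : ℝ) 0 * w2 i) :
    ∃ (u u' : Fin p → EuclideanSpace ℝ (Fin d)),
      (∀ n, 1 ≤ y n * ∑ j, D j n * (inner ℝ (x n) (u' j - u j) : ℝ)) ∧
      (∀ j n, 0 ≤ (2 * D j n - 1) * (inner ℝ (x n) (u j) : ℝ)) ∧
      (∀ j n, 0 ≤ (2 * D j n - 1) * (inner ℝ (x n) (u' j) : ℝ)) ∧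
      (∑ j, (‖u j‖ + ‖u' j‖)) ≤ (1 / 2) * ((∑ i, ‖W1 i‖ ^ 2) + ∑ i, (w2 i) ^ 2) := by
  classical
  choose j hj using fun i => hDall (W1 i)
  set P : Finset (Fin m) := Finset.univ.filter (fun i => 0 ≤ w2 i) with hP
  set Q : Finset (Fin m) := Finset.univ.filter (fun i => ¬ 0 ≤ w2 i) with hQ
  set u' : Fin p → EuclideanSpace ℝ (Fin d) :=
    fun J => ∑ i ∈ P.filter (fun i => j i = J), w2 i • W1 i with hu'def
  set u : Fin p → EuclideanSpace ℝ (Fin d) :=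
    fun J => ∑ i ∈ Q.filter (fun i => j i = J), (-(w2 i)) • W1 i with hudef
  -- cone constraints
  have cone : ∀ (R : Finset (Fin m)) (c : Fin m → ℝ), (∀ i ∈ R, 0 ≤ c i) →
      ∀ (J : Fin p) (n : Fin N),
      0 ≤ (2 * D J n - 1) *
        (inner ℝ (x n) (∑ i ∈ R.filter (fun i => j i = J), c i • W1 i) : ℝ) := by
    intro R c hc J n
    rw [inner_sum, Finset.mul_sum]
    refine Finset.sum_nonneg fun i hi => ?_
    rw [Finset.mem_filter] at hi
    rw [real_inner_smul_right, ← hi.2, hj i n]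
    have hci := hc i hi.1
    split_ifs with h
    · nlinarith
    · have h' : (inner ℝ (x n) (W1 i) : ℝ) ≤ 0 := le_of_not_ge h
      nlinarith
  have hconeU : ∀ (J : Fin p) (n : Fin N),
      0 ≤ (2 * D J n - 1) * (inner ℝ (x n) (u J) : ℝ) := by
    intro J n
    simp only [hudef]
    exact cone Q (fun i => -(w2 i))
      (fun i hi => by
        rw [hQ, Finset.mem_filter] at hi
        show (0:ℝ) ≤ -w2 i
        linarith [le_of_not_ge hi.2]) J n
  have hconeU' : ∀ (J : Fin p) (n : Fin N),
      0 ≤ (2 * D J n - 1) * (inner ℝ (x n) (u' J) : ℝ) := by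
    intro J n
    simp only [hu'def]
    exact cone P w2 (fun i hi => by rw [hP, Finset.mem_filter] at hi; exact hi.2) J n
  -- main margin constraint
  have hmain : ∀ n, ∑ J, D J n * (inner ℝ (x n) (u' J - u J) : ℝ)
      = ∑ i, max (inner ℝ (x n) (W1 i) : ℝ) 0 * w2 i := by
    intro n
    have e1 : ∑ J, D J n * (inner ℝ (x n) (u' J) : ℝ)
        = ∑ i ∈ P, max (inner ℝ (x n) (W1 i) : ℝ) 0 * w2 i := by
      rw [← Finset.sum_fiberwise P j (fun i => max (inner ℝ (x n) (W1 i) : ℝ) 0 * w2 i)]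
      refine Finset.sum_congr rfl fun J _ => ?_
      simp only [hu'def, inner_sum, real_inner_smul_right, Finset.mul_sum]
      refine Finset.sum_congr rfl fun i hi => ?_
      rw [Finset.mem_filter] at hi
      rw [← hi.2, hj i n]
      rw [show (if 0 ≤ (inner ℝ (x n) (W1 i) : ℝ) then (1:ℝ) else 0)
            * (w2 i * inner ℝ (x n) (W1 i))
          = ((if 0 ≤ (inner ℝ (x n) (W1 i) : ℝ) then (1:ℝ) else 0)
            * (inner ℝ (x n) (W1 i) : ℝ)) * w2 i by ring]
      rw [ind_mul]
    have e2 : ∑ J, D J n * (inner ℝ (x n) (u J) : ℝ)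
        = ∑ i ∈ Q, -(max (inner ℝ (x n) (W1 i) : ℝ) 0 * w2 i) := by
      rw [← Finset.sum_fiberwise Q j (fun i => -(max (inner ℝ (x n) (W1 i) : ℝ) 0 * w2 i))]
      refine Finset.sum_congr rfl fun J _ => ?_
      simp only [hudef, inner_sum, real_inner_smul_right, Finset.mul_sum]
      refine Finset.sum_congr rfl fun i hi => ?_
      rw [Finset.mem_filter] at hi
      rw [← hi.2, hj i n]
      rw [show (if 0 ≤ (inner ℝ (x n) (W1 i) : ℝ) then (1:ℝ) else 0)
            * (-(w2 i) * inner ℝ (x n) (W1 i))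
          = -(((if 0 ≤ (inner ℝ (x n) (W1 i) : ℝ) then (1:ℝ) else 0)
            * (inner ℝ (x n) (W1 i) : ℝ)) * w2 i) by ring]
      rw [ind_mul]
    simp only [inner_sub_right, mul_sub]
    rw [Finset.sum_sub_distrib, e1, e2, Finset.sum_neg_distrib, sub_neg_eq_add]
    exact Finset.sum_filter_add_sum_filter_not Finset.univ (fun i => 0 ≤ w2 i) _
  -- cost bound
  have hcost : (∑ J, (‖u J‖ + ‖u' J‖))
      ≤ (1 / 2) * ((∑ i, ‖W1 i‖ ^ 2) + ∑ i, (w2 i) ^ 2) := by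
    have b1 : ∑ J, ‖u' J‖ ≤ ∑ i ∈ P, |w2 i| * ‖W1 i‖ := by
      rw [← Finset.sum_fiberwise P j (fun i => |w2 i| * ‖W1 i‖)]
      refine Finset.sum_le_sum fun J _ => ?_
      simp only [hu'def]
      refine (norm_sum_le _ _).trans (le_of_eq ?_)
      refine Finset.sum_congr rfl fun i _ => ?_
      rw [norm_smul, Real.norm_eq_abs]
    have b2 : ∑ J, ‖u J‖ ≤ ∑ i ∈ Q, |w2 i| * ‖W1 i‖ := by
      rw [← Finset.sum_fiberwise Q j (fun i => |w2 i| * ‖W1 i‖)]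
      refine Finset.sum_le_sum fun J _ => ?_
      simp only [hudef]
      refine (norm_sum_le _ _).trans (le_of_eq ?_)
      refine Finset.sum_congr rfl fun i _ => ?_
      rw [norm_smul, Real.norm_eq_abs, abs_neg]
    have b3 : (∑ i ∈ P, |w2 i| * ‖W1 i‖) + ∑ i ∈ Q, |w2 i| * ‖W1 i‖
        = ∑ i, |w2 i| * ‖W1 i‖ :=
      Finset.sum_filter_add_sum_filter_not Finset.univ (fun i => 0 ≤ w2 i) _
    have b4 : ∑ i, |w2 i| * ‖W1 i‖
        ≤ (1 / 2) * ((∑ i, ‖W1 i‖ ^ 2) + ∑ i, (w2 i) ^ 2) := by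
      have hb : ∀ i : Fin m, |w2 i| * ‖W1 i‖ ≤ (1/2) * (‖W1 i‖ ^ 2 + (w2 i) ^ 2) := by
        intro i
        nlinarith [sq_nonneg (|w2 i| - ‖W1 i‖), sq_abs (w2 i),
          abs_nonneg (w2 i), norm_nonneg (W1 i)]
      calc ∑ i, |w2 i| * ‖W1 i‖ ≤ ∑ i, (1/2) * (‖W1 i‖ ^ 2 + (w2 i) ^ 2) :=
            Finset.sum_le_sum fun i _ => hb i
        _ = (1 / 2) * ((∑ i, ‖W1 i‖ ^ 2) + ∑ i, (w2 i) ^ 2) := by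
            rw [← Finset.mul_sum, Finset.sum_add_distrib]
    calc (∑ J, (‖u J‖ + ‖u' J‖)) = (∑ J, ‖u J‖) + ∑ J, ‖u' J‖ :=
          Finset.sum_add_distrib
      _ ≤ (∑ i ∈ Q, |w2 i| * ‖W1 i‖) + ∑ i ∈ P, |w2 i| * ‖W1 i‖ := add_le_add b2 b1
      _ = ∑ i, |w2 i| * ‖W1 i‖ := by rw [add_comm]; exact b3
      _ ≤ _ := b4
  exact ⟨u, u', fun n => by rw [hmain n]; exact hcon n, hconeU, hconeU', hcost⟩

end MaxMarginAux

open MaxMarginAux in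
/-- With `p = |P|` hyperplane arrangement patterns `D j` of the data matrix
(rows `x n`), and `m ≥ 2p` hidden neurons, the optimal value of the non-convex two-layer
ReLU max-margin problem equals that of the equivalent convex program. -/
theorem nonconvex_maxmargin_eq_convex_maxmargin
    {N d m p : ℕ}
    (x : Fin N → EuclideanSpace ℝ (Fin d)) (y : Fin N → ℝ)
    (hy : ∀ n, y n = 1 ∨ y n = -1)
    (D : Fin p → Fin N → ℝ)
    (hDarr : ∀ j, ∃ w : EuclideanSpace ℝ (Fin d),
      ∀ n, D j n = if 0 ≤ (inner ℝ (x n) w : ℝ) then (1 : ℝ) else 0)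
    (hDall : ∀ w : EuclideanSpace ℝ (Fin d),
      ∃ j, ∀ n, D j n = if 0 ≤ (inner ℝ (x n) w : ℝ) then (1 : ℝ) else 0)
    (hDinj : Function.Injective D)
    (hm : 2 * p ≤ m) :
    sInf {v : ℝ | ∃ (W1 : Fin m → EuclideanSpace ℝ (Fin d)) (w2 : Fin m → ℝ),
        (∀ n, 1 ≤ y n * ∑ i, max (inner ℝ (x n) (W1 i) : ℝ) 0 * w2 i) ∧
        v = (1 / 2) * ((∑ i, ‖W1 i‖ ^ 2) + ∑ i, (w2 i) ^ 2)} =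
    sInf {v : ℝ | ∃ (u u' : Fin p → EuclideanSpace ℝ (Fin d)),
        (∀ n, 1 ≤ y n * ∑ j, D j n * (inner ℝ (x n) (u' j - u j) : ℝ)) ∧
        (∀ j n, 0 ≤ (2 * D j n - 1) * (inner ℝ (x n) (u j) : ℝ)) ∧
        (∀ j n, 0 ≤ (2 * D j n - 1) * (inner ℝ (x n) (u' j) : ℝ)) ∧
        v = ∑ j, (‖u j‖ + ‖u' j‖)} := by
  classical
  have hD01 : ∀ j n, D j n = 0 ∨ D j n = 1 := by
    intro j n
    obtain ⟨w, hw⟩ := hDarr j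
    rw [hw n]
    split_ifs <;> simp
  set S1 : Set ℝ := {v : ℝ | ∃ (W1 : Fin m → EuclideanSpace ℝ (Fin d)) (w2 : Fin m → ℝ),
        (∀ n, 1 ≤ y n * ∑ i, max (inner ℝ (x n) (W1 i) : ℝ) 0 * w2 i) ∧
        v = (1 / 2) * ((∑ i, ‖W1 i‖ ^ 2) + ∑ i, (w2 i) ^ 2)} with hS1def
  set S2 : Set ℝ := {v : ℝ | ∃ (u u' : Fin p → EuclideanSpace ℝ (Fin d)),
        (∀ n, 1 ≤ y n * ∑ j, D j n * (inner ℝ (x n) (u' j - u j) : ℝ)) ∧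
        (∀ j n, 0 ≤ (2 * D j n - 1) * (inner ℝ (x n) (u j) : ℝ)) ∧
        (∀ j n, 0 ≤ (2 * D j n - 1) * (inner ℝ (x n) (u' j) : ℝ)) ∧
        v = ∑ j, (‖u j‖ + ‖u' j‖)} with hS2def
  have bdd1 : BddBelow S1 := by
    refine ⟨0, fun v hv => ?_⟩
    obtain ⟨W1, w2, _, rfl⟩ := hv
    positivity
  have bdd2 : BddBelow S2 := by
    refine ⟨0, fun v hv => ?_⟩
    obtain ⟨u, u', _, _, _, rfl⟩ := hv
    have : ∀ j : Fin p, 0 ≤ ‖u j‖ + ‖u' j‖ := fun j => by positivity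
    exact Finset.sum_nonneg fun j _ => this j
  have hsub : S2 ⊆ S1 := by
    intro v hv
    obtain ⟨u, u', hcon, hu, hu', rfl⟩ := hv
    obtain ⟨W1, w2, h1, h2⟩ := key2 x y D hD01 hm u u' hcon hu hu'
    exact ⟨W1, w2, h1, h2.symm⟩
  have h21 : ∀ v ∈ S1, ∃ w ∈ S2, w ≤ v := by
    intro v hv
    obtain ⟨W1, w2, hcon, rfl⟩ := hv
    obtain ⟨u, u', h1, h2, h3, h4⟩ := key1 x y D hDall W1 w2 hcon
    exact ⟨∑ j, (‖u j‖ + ‖u' j‖), ⟨u, u', h1, h2, h3, rfl⟩, h4⟩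
  rcases Set.eq_empty_or_nonempty S1 with h | h
  · have h2 : S2 = ∅ := Set.eq_empty_of_subset_empty (h ▸ hsub)
    rw [h, h2]
  · obtain ⟨v, hv⟩ := h
    obtain ⟨w, hw, _⟩ := h21 v hv
    refine le_antisymm (csInf_le_csInf bdd1 ⟨w, hw⟩ hsub) ?_
    refine le_csInf ⟨v, hv⟩ fun b hb => ?_
    obtain ⟨c, hc, hcb⟩ := h21 b hb
    exact (csInf_le bdd2 hc).trans hcb
end
end

section
/- (Weak duality for the convex max-margin program.) Let λ ∈ ℝ^N satisfy y_nλ_n ≥ 0 for all n and |λᵀ(Xu)_+| ≤ 1 for every u ∈ ℝ^d with ‖u‖₂ ≤ 1. Then for every feasible point of the convex max-margin program, i.e. vectors u_1,…,u_p, u_1′,…,u_p′ ∈ ℝ^d with y_n Σ_{j=1}^p (D_j)_{nn} x_nᵀ(u_j′ − u_j) ≥ 1 for all n and (2D_j − I)Xu_j ≥ 0, (2D_j − I)Xu_j′ ≥ 0 entrywise for all j, one has yᵀλ ≤ Σ_{j=1}^p (‖u_j‖₂ + ‖u_j′‖₂). -/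
open scoped BigOperators

noncomputable section

/-- Weak duality for the convex max-margin program. If `λ` is dual feasible
(`y n * λ n ≥ 0` and `|λᵀ(Xu)₊| ≤ 1` for all unit-ball `u`), then `yᵀλ` lower bounds the
objective of any feasible point of the convex max-margin program. -/
theorem weak_duality_convex_maxmargin
    {N d p : ℕ}
    (x : Fin N → EuclideanSpace ℝ (Fin d)) (y : Fin N → ℝ)
    (hy : ∀ n, y n = 1 ∨ y n = -1)
    (D : Fin p → Fin N → ℝ)
    (hDarr : ∀ j, ∃ w : EuclideanSpace ℝ (Fin d),
      ∀ n, D j n = if 0 ≤ (inner ℝ (x n) w : ℝ) then (1 : ℝ) else 0)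
    (hDall : ∀ w : EuclideanSpace ℝ (Fin d),
      ∃ j, ∀ n, D j n = if 0 ≤ (inner ℝ (x n) w : ℝ) then (1 : ℝ) else 0)
    (hDinj : Function.Injective D)
    (lam : Fin N → ℝ)
    (hlam_sign : ∀ n, 0 ≤ y n * lam n)
    (hlam_feas : ∀ u : EuclideanSpace ℝ (Fin d), ‖u‖ ≤ 1 →
      |∑ n, lam n * max (inner ℝ (x n) u : ℝ) 0| ≤ 1)
    (u u' : Fin p → EuclideanSpace ℝ (Fin d))
    (hmargin : ∀ n, 1 ≤ y n * ∑ j, D j n * (inner ℝ (x n) (u' j - u j) : ℝ))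
    (hcone : ∀ j n, 0 ≤ (2 * D j n - 1) * (inner ℝ (x n) (u j) : ℝ))
    (hcone' : ∀ j n, 0 ≤ (2 * D j n - 1) * (inner ℝ (x n) (u' j) : ℝ)) :
    ∑ n, y n * lam n ≤ ∑ j, (‖u j‖ + ‖u' j‖) := by
  -- D values are 0 or 1
  have hD01 : ∀ j n, D j n = 0 ∨ D j n = 1 := by
    intro j n
    obtain ⟨w, hw⟩ := hDarr j
    rw [hw n]
    by_cases h : 0 ≤ (inner ℝ (x n) w : ℝ)
    · right; rw [if_pos h]
    · left; rw [if_neg h]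
  -- cone condition turns D j n * ⟨x n, v⟩ into max
  have key : ∀ (v : Fin p → EuclideanSpace ℝ (Fin d)),
      (∀ j n, 0 ≤ (2 * D j n - 1) * (inner ℝ (x n) (v j) : ℝ)) →
      ∀ j n, D j n * (inner ℝ (x n) (v j) : ℝ) = max (inner ℝ (x n) (v j) : ℝ) 0 := by
    intro v hc j n
    have hcjn := hc j n
    rcases hD01 j n with h | h <;> rw [h] at hcjn ⊢
    · have ha : (inner ℝ (x n) (v j) : ℝ) ≤ 0 := by nlinarith
      rw [max_eq_right ha, zero_mul]
    · have ha : (0 : ℝ) ≤ inner ℝ (x n) (v j) := by nlinarith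
      rw [max_eq_left ha, one_mul]
  -- scaled dual feasibility bound
  have hbound : ∀ v : EuclideanSpace ℝ (Fin d),
      |∑ n, lam n * max (inner ℝ (x n) v : ℝ) 0| ≤ ‖v‖ := by
    intro v
    by_cases hv : v = 0
    · simp [hv]
    · have hnv : 0 < ‖v‖ := norm_pos_iff.mpr hv
      have h1 : ‖(‖v‖⁻¹ • v : EuclideanSpace ℝ (Fin d))‖ ≤ 1 := by
        rw [norm_smul, norm_inv, norm_norm, inv_mul_cancel₀ hnv.ne']
      have h2 := hlam_feas _ h1
      have heq : ∑ n, lam n * max (inner ℝ (x n) (‖v‖⁻¹ • v) : ℝ) 0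
          = ‖v‖⁻¹ * ∑ n, lam n * max (inner ℝ (x n) v : ℝ) 0 := by
        rw [Finset.mul_sum]
        refine Finset.sum_congr rfl fun n _ => ?_
        rw [real_inner_smul_right]
        have : max (‖v‖⁻¹ * (inner ℝ (x n) v : ℝ)) 0
            = ‖v‖⁻¹ * max (inner ℝ (x n) v : ℝ) 0 := by
          rcases le_total ((inner ℝ (x n) v : ℝ)) 0 with h | h
          · rw [max_eq_right h, max_eq_right, mul_zero]
            exact mul_nonpos_of_nonneg_of_nonpos (inv_nonneg.mpr hnv.le) h
          · rw [max_eq_left h, max_eq_left]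
            exact mul_nonneg (inv_nonneg.mpr hnv.le) h
        rw [this]; ring
      rw [heq, abs_mul, abs_of_pos (inv_pos.mpr hnv)] at h2
      calc |∑ n, lam n * max (inner ℝ (x n) v : ℝ) 0|
          = ‖v‖ * (‖v‖⁻¹ * |∑ n, lam n * max (inner ℝ (x n) v : ℝ) 0|) := by
            field_simp
        _ ≤ ‖v‖ * 1 := by
            exact mul_le_mul_of_nonneg_left h2 hnv.le
        _ = ‖v‖ := mul_one _
  have hy2 : ∀ n, y n * y n = 1 := by
    intro n; rcases hy n with h | h <;> rw [h] <;> norm_num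
  calc ∑ n, y n * lam n
      ≤ ∑ n, lam n * ∑ j, D j n * (inner ℝ (x n) (u' j - u j) : ℝ) := by
        refine Finset.sum_le_sum fun n _ => ?_
        have h1 := hmargin n
        have h2 := hlam_sign n
        nlinarith [hy2 n, mul_le_mul_of_nonneg_left h1 h2]
    _ = ∑ n, ∑ j, (lam n * max (inner ℝ (x n) (u' j) : ℝ) 0
          - lam n * max (inner ℝ (x n) (u j) : ℝ) 0) := by
        refine Finset.sum_congr rfl fun n _ => ?_
        rw [Finset.mul_sum]
        refine Finset.sum_congr rfl fun j _ => ?_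
        rw [inner_sub_right, mul_sub, key u hcone j n, key u' hcone' j n, mul_sub]
    _ = ∑ j, ∑ n, (lam n * max (inner ℝ (x n) (u' j) : ℝ) 0
          - lam n * max (inner ℝ (x n) (u j) : ℝ) 0) := Finset.sum_comm
    _ = ∑ j, ((∑ n, lam n * max (inner ℝ (x n) (u' j) : ℝ) 0)
          - ∑ n, lam n * max (inner ℝ (x n) (u j) : ℝ) 0) := by
        refine Finset.sum_congr rfl fun j _ => ?_
        rw [Finset.sum_sub_distrib]
    _ ≤ ∑ j, (‖u j‖ + ‖u' j‖) := by
        refine Finset.sum_le_sum fun j _ => ?_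
        have h1 := hbound (u j)
        have h2 := hbound (u' j)
        have h1' := abs_le.mp h1
        have h2' := abs_le.mp h2
        linarith [h1'.1, h1'.2, h2'.1, h2'.2]
end
end

section
/- For every λ ∈ ℝ^N the following are equivalent: (i) |λᵀ(Xu)_+| ≤ 1 for all u ∈ ℝ^d with ‖u‖₂ ≤ 1; (ii) for every D ∈ P and every u ∈ ℝ^d with ‖u‖₂ ≤ 1 and (2D − I)Xu ≥ 0 entrywise, |λᵀD Xu| ≤ 1. -/
open scoped BigOperators

noncomputable section

/-- Dual feasibility `|λᵀ(Xu)₊| ≤ 1` over the unit ball is equivalent to the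
family of conic constraints `|λᵀ D X u| ≤ 1` over all hyperplane arrangement patterns
`D ∈ P` and unit-ball `u` with `(2D − I)Xu ≥ 0`. -/
theorem dual_feasibility_iff_arrangement_constraints
    {N d : ℕ}
    (x : Fin N → EuclideanSpace ℝ (Fin d))
    (lam : Fin N → ℝ) :
    (∀ u : EuclideanSpace ℝ (Fin d), ‖u‖ ≤ 1 →
        |∑ n, lam n * max (inner ℝ (x n) u : ℝ) 0| ≤ 1) ↔
    (∀ D : Fin N → ℝ,
        (∃ w : EuclideanSpace ℝ (Fin d),
          ∀ n, D n = if 0 ≤ (inner ℝ (x n) w : ℝ) then (1 : ℝ) else 0) →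
        ∀ u : EuclideanSpace ℝ (Fin d), ‖u‖ ≤ 1 →
          (∀ n, 0 ≤ (2 * D n - 1) * (inner ℝ (x n) u : ℝ)) →
          |∑ n, lam n * (D n * (inner ℝ (x n) u : ℝ))| ≤ 1) := by
  constructor
  · intro h D ⟨w, hw⟩ u hu hcone
    have key : ∀ n, D n * (inner ℝ (x n) u : ℝ) = max (inner ℝ (x n) u : ℝ) 0 := by
      intro n
      have hD := hw n
      by_cases h1 : 0 ≤ (inner ℝ (x n) w : ℝ)
      · rw [if_pos h1] at hD
        have := hcone n
        rw [hD] at this ⊢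
        have : 0 ≤ (inner ℝ (x n) u : ℝ) := by nlinarith
        rw [max_eq_left this]; ring
      · rw [if_neg h1] at hD
        have := hcone n
        rw [hD] at this ⊢
        have : (inner ℝ (x n) u : ℝ) ≤ 0 := by nlinarith
        rw [max_eq_right this]; ring
    simpa only [key] using h u hu
  · intro h u hu
    set D : Fin N → ℝ := fun n => if 0 ≤ (inner ℝ (x n) u : ℝ) then (1 : ℝ) else 0 with hD
    have hDn : ∀ n, D n = if 0 ≤ (inner ℝ (x n) u : ℝ) then (1 : ℝ) else 0 := fun n => rfl
    have key : ∀ n, D n * (inner ℝ (x n) u : ℝ) = max (inner ℝ (x n) u : ℝ) 0 := by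
      intro n
      by_cases h1 : 0 ≤ (inner ℝ (x n) u : ℝ)
      · rw [hDn n, if_pos h1, max_eq_left h1, one_mul]
      · push_neg at h1
        rw [hDn n, if_neg (not_le.mpr h1), max_eq_right h1.le, zero_mul]
    have hcone : ∀ n, 0 ≤ (2 * D n - 1) * (inner ℝ (x n) u : ℝ) := by
      intro n
      by_cases h1 : 0 ≤ (inner ℝ (x n) u : ℝ)
      · rw [hDn n, if_pos h1]; nlinarith
      · push_neg at h1
        rw [hDn n, if_neg (not_le.mpr h1)]; nlinarith
    simpa only [key] using h D ⟨u, fun n => rfl⟩ u hu hcone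
end
end

section
/- Let λ ∈ ℝ^N and let D̂_0 and D be diagonal N×N matrices with entries in {0,1}. Suppose u_0 = XᵀD̂_0λ satisfies ‖u_0‖₂ ≤ 1, and suppose D_{nn} = (D̂_0)_{nn} for every n with λ_n > 0. Then for every u ∈ ℝ^d with ‖u‖₂ ≤ 1 and (2D − I)Xu ≥ 0 entrywise, λᵀD Xu ≤ 1. -/
open scoped BigOperators

noncomputable section

/-- Lemma `lem:neg`: if `u₀ = Xᵀ D̂₀ λ` has norm at most one and the 0/1
diagonal pattern `D` agrees with `D̂₀` on every coordinate where `λ_n > 0`, then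
`λᵀ D X u ≤ 1` for every `u` in the unit ball with `(2D − I)Xu ≥ 0`. -/
theorem arrangement_constraint_of_agreement_on_positive_part
    {N d : ℕ}
    (x : Fin N → EuclideanSpace ℝ (Fin d))
    (lam : Fin N → ℝ)
    (D0 D : Fin N → ℝ)
    (hD0 : ∀ n, D0 n = 0 ∨ D0 n = 1)
    (hD : ∀ n, D n = 0 ∨ D n = 1)
    (u0 : EuclideanSpace ℝ (Fin d))
    (hu0 : u0 = ∑ n, (D0 n * lam n) • x n)
    (hu0norm : ‖u0‖ ≤ 1)
    (hagree : ∀ n, 0 < lam n → D n = D0 n) :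
    ∀ u : EuclideanSpace ℝ (Fin d), ‖u‖ ≤ 1 →
      (∀ n, 0 ≤ (2 * D n - 1) * (inner ℝ (x n) u : ℝ)) →
      ∑ n, lam n * (D n * (inner ℝ (x n) u : ℝ)) ≤ 1 := by
  intro u hu hsign
  have key : ∑ n, lam n * (D n * (inner ℝ (x n) u : ℝ))
      ≤ ∑ n, lam n * (D0 n * (inner ℝ (x n) u : ℝ)) := by
    apply Finset.sum_le_sum
    intro n _
    by_cases hpos : 0 < lam n
    · rw [hagree n hpos]
    · push_neg at hpos
      set s := (inner ℝ (x n) u : ℝ) with hs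
      rcases hD n with h1 | h1
      · -- D n = 0, so (−1)*s ≥ 0, i.e. s ≤ 0
        have hsle : s ≤ 0 := by nlinarith [hsign n]
        rw [h1]
        rcases hD0 n with h0 | h0 <;> rw [h0] <;> nlinarith
      · -- D n = 1, so s ≥ 0
        have hsge : 0 ≤ s := by nlinarith [hsign n]
        rw [h1]
        rcases hD0 n with h0 | h0 <;> rw [h0] <;> nlinarith
  have hinner : (inner ℝ u0 u : ℝ) = ∑ n, lam n * (D0 n * (inner ℝ (x n) u : ℝ)) := by
    rw [hu0, sum_inner]
    congr 1; ext n
    rw [real_inner_smul_left]; ring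
  have hcs : (inner ℝ u0 u : ℝ) ≤ 1 := by
    calc (inner ℝ u0 u : ℝ) ≤ ‖u0‖ * ‖u‖ := real_inner_le_norm u0 u
    _ ≤ 1 * 1 := by
        apply mul_le_mul hu0norm hu (norm_nonneg u) zero_le_one
    _ = 1 := by ring
  linarith [key, hinner ▸ hcs]
end
end

section
/- Assume the dataset (X,y) is orthogonally separable and let λ ∈ ℝ^N satisfy y_nλ_n ≥ 0 for all n. Let D̂_0 and D be diagonal N×N matrices with entries in {0,1} such that D_{nn} ≤ (D̂_0)_{nn} for all n. Then ‖XᵀDλ‖₂ ≤ ‖XᵀD̂_0λ‖₂. -/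
open scoped BigOperators

noncomputable section

/-- Lemma `lem:lower`: for orthogonally separable data and a dual-sign-consistent
`λ`, shrinking the 0/1 diagonal pattern entrywise can only decrease `‖Xᵀ D λ‖₂`. -/
theorem norm_mono_of_orthogonal_separable
    {N d : ℕ}
    (x : Fin N → EuclideanSpace ℝ (Fin d)) (y : Fin N → ℝ)
    (hy : ∀ n, y n = 1 ∨ y n = -1)
    (hsep_same : ∀ n n', y n = y n' → 0 < (inner ℝ (x n) (x n') : ℝ))
    (hsep_diff : ∀ n n', y n ≠ y n' → (inner ℝ (x n) (x n') : ℝ) ≤ 0)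
    (lam : Fin N → ℝ)
    (hlam_sign : ∀ n, 0 ≤ y n * lam n)
    (D0 D : Fin N → ℝ)
    (hD0 : ∀ n, D0 n = 0 ∨ D0 n = 1)
    (hD : ∀ n, D n = 0 ∨ D n = 1)
    (hle : ∀ n, D n ≤ D0 n) :
    ‖∑ n, (D n * lam n) • x n‖ ≤ ‖∑ n, (D0 n * lam n) • x n‖ := by
  set S : EuclideanSpace ℝ (Fin d) := ∑ n, (D n * lam n) • x n with hS
  set R : EuclideanSpace ℝ (Fin d) := ∑ n, ((D0 n - D n) * lam n) • x n with hR
  have key : ∀ n m : Fin N, 0 ≤ lam n * lam m * inner ℝ (x n) (x m) := by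
    intro n m
    have hprod : 0 ≤ (y n * lam n) * (y m * lam m) :=
      mul_nonneg (hlam_sign n) (hlam_sign m)
    by_cases h : y n = y m
    · have h1 : 0 ≤ lam n * lam m := by
        have hnn : y n * y n = 1 := by rcases hy n with hn | hn <;> rw [hn] <;> norm_num
        rw [← h] at hprod
        nlinarith [hprod, hnn]
      exact mul_nonneg h1 (hsep_same n m h).le
    · have h1 : lam n * lam m ≤ 0 := by
        have hnm : y n * y m = -1 := by
          rcases hy n with hn | hn <;> rcases hy m with hm | hm
          · exact absurd (hn.trans hm.symm) h
          · rw [hn, hm]; norm_num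
          · rw [hn, hm]; norm_num
          · exact absurd (hn.trans hm.symm) h
        nlinarith [hprod, hnm]
      nlinarith [hsep_diff n m h, h1]
  have hDnonneg : ∀ n, 0 ≤ D n := fun n => by rcases hD n with h | h <;> simp [h]
  have hdiff : ∀ n, 0 ≤ D0 n - D n := fun n => sub_nonneg.2 (hle n)
  have hinner : 0 ≤ (inner ℝ S R : ℝ) := by
    rw [hS, hR, sum_inner]
    apply Finset.sum_nonneg
    intro n _
    rw [inner_sum]
    apply Finset.sum_nonneg
    intro m _
    rw [real_inner_smul_left, real_inner_smul_right]
    have := key n m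
    have := mul_nonneg (hDnonneg n) (hdiff m)
    nlinarith
  have hsum : ∑ n, (D0 n * lam n) • x n = S + R := by
    rw [hS, hR, ← Finset.sum_add_distrib]
    congr 1; ext n
    rw [← add_smul]; ring_nf
  rw [hsum]
  have hsq : ‖S‖ ^ 2 ≤ ‖S + R‖ ^ 2 := by
    have := norm_add_sq_real S R
    nlinarith [norm_nonneg R, sq_nonneg ‖R‖]
  nlinarith [norm_nonneg S, norm_nonneg (S + R)]
end
end

section
/- Assume the dataset (X,y) is orthogonally separable and let λ ∈ ℝ^N satisfy y_nλ_n ≥ 0 for all n. Suppose there exist diagonal N×N matrices D_+ and D_− with entries in {0,1} such that (D_+)_{nn} = 1 whenever y_n = 1, (D_−)_{nn} = 1 whenever y_n = −1, ‖XᵀD_+λ‖₂ ≤ 1, and ‖XᵀD_−λ‖₂ ≤ 1. Then λ is dual feasible: |λᵀ(Xu)_+| ≤ 1 for every u ∈ ℝ^d with ‖u‖₂ ≤ 1. -/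
open scoped BigOperators

noncomputable section

private lemma norm_subsum_le {N d : ℕ}
    (x : Fin N → EuclideanSpace ℝ (Fin d)) (c : Fin N → ℝ)
    (h : ∀ n m, 0 ≤ c n * c m * (inner ℝ (x n) (x m) : ℝ))
    {A T : Finset (Fin N)} (hAT : A ⊆ T) :
    ‖∑ n ∈ A, c n • x n‖ ≤ ‖∑ n ∈ T, c n • x n‖ := by
  set a := ∑ n ∈ A, c n • x n with ha
  set b := ∑ n ∈ T \ A, c n • x n with hb
  have hsum : ∑ n ∈ T, c n • x n = a + b := by
    rw [ha, hb, add_comm, Finset.sum_sdiff hAT]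
  have hab : 0 ≤ (inner ℝ a b : ℝ) := by
    rw [ha, hb, sum_inner]
    apply Finset.sum_nonneg
    intro n _
    rw [inner_sum]
    apply Finset.sum_nonneg
    intro m _
    rw [real_inner_smul_left, real_inner_smul_right]
    have := h n m
    nlinarith
  rw [hsum]
  have h2 : ‖a + b‖ ^ 2 = ‖a‖ ^ 2 + 2 * (inner ℝ a b : ℝ) + ‖b‖ ^ 2 :=
    norm_add_sq_real a b
  nlinarith [norm_nonneg a, norm_nonneg (a + b), norm_nonneg b]

/-- Proposition `prop:dual_ortho`: on orthogonally separable data, if the 0/1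
patterns `D₊, D₋` cover the positive and negative labels respectively and `‖Xᵀ D₊ λ‖ ≤ 1`,
`‖Xᵀ D₋ λ‖ ≤ 1`, then `λ` is dual feasible. -/
theorem dual_feasible_of_orthogonal_separable
    {N d : ℕ}
    (x : Fin N → EuclideanSpace ℝ (Fin d)) (y : Fin N → ℝ)
    (hy : ∀ n, y n = 1 ∨ y n = -1)
    (hsep_same : ∀ n n', y n = y n' → 0 < (inner ℝ (x n) (x n') : ℝ))
    (hsep_diff : ∀ n n', y n ≠ y n' → (inner ℝ (x n) (x n') : ℝ) ≤ 0)
    (lam : Fin N → ℝ)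
    (hlam_sign : ∀ n, 0 ≤ y n * lam n)
    (Dp Dm : Fin N → ℝ)
    (hDp01 : ∀ n, Dp n = 0 ∨ Dp n = 1)
    (hDm01 : ∀ n, Dm n = 0 ∨ Dm n = 1)
    (hDp : ∀ n, y n = 1 → Dp n = 1)
    (hDm : ∀ n, y n = -1 → Dm n = 1)
    (hDpnorm : ‖∑ n, (Dp n * lam n) • x n‖ ≤ 1)
    (hDmnorm : ‖∑ n, (Dm n * lam n) • x n‖ ≤ 1) :
    ∀ u : EuclideanSpace ℝ (Fin d), ‖u‖ ≤ 1 →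
      |∑ n, lam n * max (inner ℝ (x n) u : ℝ) 0| ≤ 1 := by
  intro u hu
  -- all cross terms are nonnegative
  have hcross : ∀ n m, 0 ≤ lam n * lam m * (inner ℝ (x n) (x m) : ℝ) := by
    intro n m
    by_cases hnm : y n = y m
    · have hinner := hsep_same n m hnm
      have h1 := hlam_sign n
      have h2 := hlam_sign m
      have : 0 ≤ lam n * lam m := by
        rcases hy n with h | h <;> rcases hy m with h' | h' <;>
          rw [h] at h1 <;> rw [h'] at h2 <;> first
          | nlinarith
          | (exfalso; rw [h, h'] at hnm; norm_num at hnm)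
      nlinarith
    · have hinner := hsep_diff n m hnm
      have h1 := hlam_sign n
      have h2 := hlam_sign m
      have : lam n * lam m ≤ 0 := by
        rcases hy n with h | h <;> rcases hy m with h' | h' <;>
          rw [h] at h1 <;> rw [h'] at h2 <;> first
          | nlinarith
          | (exfalso; exact hnm (by rw [h, h']))
      nlinarith
  -- rewrite the D sums as sums over filters
  have hPsum : ∑ n, (Dp n * lam n) • x n
      = ∑ n ∈ Finset.univ.filter (fun n => Dp n = 1), lam n • x n := by
    rw [Finset.sum_filter]
    apply Finset.sum_congr rfl
    intro n _
    rcases hDp01 n with h | h <;> simp [h]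
  have hMsum : ∑ n, (Dm n * lam n) • x n
      = ∑ n ∈ Finset.univ.filter (fun n => Dm n = 1), lam n • x n := by
    rw [Finset.sum_filter]
    apply Finset.sum_congr rfl
    intro n _
    rcases hDm01 n with h | h <;> simp [h]
  set A := Finset.univ.filter (fun n => y n = 1 ∧ 0 < (inner ℝ (x n) u : ℝ)) with hA
  set B := Finset.univ.filter (fun n => y n = -1 ∧ 0 < (inner ℝ (x n) u : ℝ)) with hB
  have hAsub : A ⊆ Finset.univ.filter (fun n => Dp n = 1) := by
    intro n hn
    simp only [hA, Finset.mem_filter] at hn ⊢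
    exact ⟨hn.1, hDp n hn.2.1⟩
  have hBsub : B ⊆ Finset.univ.filter (fun n => Dm n = 1) := by
    intro n hn
    simp only [hB, Finset.mem_filter] at hn ⊢
    exact ⟨hn.1, hDm n hn.2.1⟩
  have hwA : ‖∑ n ∈ A, lam n • x n‖ ≤ 1 := by
    calc ‖∑ n ∈ A, lam n • x n‖
        ≤ ‖∑ n ∈ Finset.univ.filter (fun n => Dp n = 1), lam n • x n‖ :=
          norm_subsum_le x lam hcross hAsub
      _ ≤ 1 := by rw [← hPsum]; exact hDpnorm
  have hwB : ‖∑ n ∈ B, lam n • x n‖ ≤ 1 := by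
    calc ‖∑ n ∈ B, lam n • x n‖
        ≤ ‖∑ n ∈ Finset.univ.filter (fun n => Dm n = 1), lam n • x n‖ :=
          norm_subsum_le x lam hcross hBsub
      _ ≤ 1 := by rw [← hMsum]; exact hDmnorm
  -- inner products of subsums with u
  have hinnerA : (inner ℝ (∑ n ∈ A, lam n • x n) u : ℝ)
      = ∑ n ∈ A, lam n * (inner ℝ (x n) u : ℝ) := by
    rw [sum_inner]; exact Finset.sum_congr rfl fun n _ => real_inner_smul_left _ _ _
  have hinnerB : (inner ℝ (∑ n ∈ B, lam n • x n) u : ℝ)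
      = ∑ n ∈ B, lam n * (inner ℝ (x n) u : ℝ) := by
    rw [sum_inner]; exact Finset.sum_congr rfl fun n _ => real_inner_smul_left _ _ _
  have hCSA : ∑ n ∈ A, lam n * (inner ℝ (x n) u : ℝ) ≤ 1 := by
    rw [← hinnerA]
    calc (inner ℝ (∑ n ∈ A, lam n • x n) u : ℝ)
        ≤ ‖∑ n ∈ A, lam n • x n‖ * ‖u‖ := real_inner_le_norm _ _
      _ ≤ 1 := by nlinarith [norm_nonneg (∑ n ∈ A, lam n • x n), norm_nonneg u]
  have hCSB : -1 ≤ ∑ n ∈ B, lam n * (inner ℝ (x n) u : ℝ) := by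
    rw [← hinnerB]
    have := abs_real_inner_le_norm (∑ n ∈ B, lam n • x n) u
    have habs : |(inner ℝ (∑ n ∈ B, lam n • x n) u : ℝ)| ≤ 1 := by
      nlinarith [norm_nonneg (∑ n ∈ B, lam n • x n), norm_nonneg u]
    linarith [(abs_le.mp habs).1]
  rw [abs_le]
  constructor
  · -- lower bound: sum ≥ sum over B ≥ -1
    have hsplit : ∑ n ∈ B, lam n * max (inner ℝ (x n) u : ℝ) 0
        ≤ ∑ n, lam n * max (inner ℝ (x n) u : ℝ) 0 := by
      apply Finset.sum_le_sum_of_subset_of_nonneg (Finset.subset_univ B)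
      intro n _ hn
      simp only [hB, Finset.mem_filter, Finset.mem_univ, true_and, not_and, not_lt] at hn
      rcases hy n with h | h
      · have h1 := hlam_sign n
        rw [h, one_mul] at h1
        exact mul_nonneg h1 (le_max_right _ _)
      · have := hn h
        rw [max_eq_right this]
        simp
    have heq : ∑ n ∈ B, lam n * max (inner ℝ (x n) u : ℝ) 0
        = ∑ n ∈ B, lam n * (inner ℝ (x n) u : ℝ) := by
      apply Finset.sum_congr rfl
      intro n hn
      simp only [hB, Finset.mem_filter] at hn
      rw [max_eq_left hn.2.2.le]
    linarith [heq ▸ hsplit]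
  · -- upper bound: sum ≤ sum over A ≤ 1
    have hsplit : ∑ n, lam n * max (inner ℝ (x n) u : ℝ) 0
        ≤ ∑ n ∈ A, lam n * max (inner ℝ (x n) u : ℝ) 0 := by
      rw [← Finset.sum_sdiff (Finset.subset_univ A)]
      have hneg : ∑ n ∈ Finset.univ \ A, lam n * max (inner ℝ (x n) u : ℝ) 0 ≤ 0 := by
        apply Finset.sum_nonpos
        intro n hn
        simp only [hA, Finset.mem_sdiff, Finset.mem_filter, Finset.mem_univ, true_and,
          not_and, not_lt] at hn
        rcases hy n with h | h
        · have := hn h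
          rw [max_eq_right this]
          simp
        · have h1 := hlam_sign n
          rw [h] at h1
          have : lam n ≤ 0 := by linarith
          exact mul_nonpos_of_nonpos_of_nonneg this (le_max_right _ _)
      linarith
    have heq : ∑ n ∈ A, lam n * max (inner ℝ (x n) u : ℝ) 0
        = ∑ n ∈ A, lam n * (inner ℝ (x n) u : ℝ) := by
      apply Finset.sum_congr rfl
      intro n hn
      simp only [hA, Finset.mem_filter] at hn
      rw [max_eq_left hn.2.2.le]
    linarith [heq ▸ hsplit]
end
end

section
/- Assume X is spike-free and let λ ∈ ℝ^N satisfy y_nλ_n ≥ 0 for all n. Suppose there exist diagonal N×N matrices D_+ and D_− with entries in {0,1} such that (D_+)_{nn} = 1 whenever y_n = 1, (D_−)_{nn} = 1 whenever y_n = −1, ‖XᵀD_+λ‖₂ ≤ 1, and ‖XᵀD_−λ‖₂ ≤ 1. Then λ is dual feasible: |λᵀ(Xu)_+| ≤ 1 for every u ∈ ℝ^d with ‖u‖₂ ≤ 1. -/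
open scoped BigOperators

noncomputable section

/-- Proposition `prop:dual_spike_free`: if `X` is spike-free, the 0/1 patterns
`D₊, D₋` cover the positive and negative labels respectively, and `‖Xᵀ D₊ λ‖ ≤ 1`,
`‖Xᵀ D₋ λ‖ ≤ 1`, then `λ` is dual feasible. -/
theorem dual_feasible_of_spike_free
    {N d : ℕ}
    (x : Fin N → EuclideanSpace ℝ (Fin d)) (y : Fin N → ℝ)
    (hy : ∀ n, y n = 1 ∨ y n = -1)
    (hspikefree : ∀ u : EuclideanSpace ℝ (Fin d), ‖u‖ ≤ 1 →
      ∃ z : EuclideanSpace ℝ (Fin d), ‖z‖ ≤ 1 ∧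
        ∀ n, max (inner ℝ (x n) u : ℝ) 0 = (inner ℝ (x n) z : ℝ))
    (lam : Fin N → ℝ)
    (hlam_sign : ∀ n, 0 ≤ y n * lam n)
    (Dp Dm : Fin N → ℝ)
    (hDp01 : ∀ n, Dp n = 0 ∨ Dp n = 1)
    (hDm01 : ∀ n, Dm n = 0 ∨ Dm n = 1)
    (hDp : ∀ n, y n = 1 → Dp n = 1)
    (hDm : ∀ n, y n = -1 → Dm n = 1)
    (hDpnorm : ‖∑ n, (Dp n * lam n) • x n‖ ≤ 1)
    (hDmnorm : ‖∑ n, (Dm n * lam n) • x n‖ ≤ 1) :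
    ∀ u : EuclideanSpace ℝ (Fin d), ‖u‖ ≤ 1 →
      |∑ n, lam n * max (inner ℝ (x n) u : ℝ) 0| ≤ 1 := by
  intro u hu
  obtain ⟨z, hz, hzeq⟩ := hspikefree u hu
  set m : Fin N → ℝ := fun n => max (inner ℝ (x n) u : ℝ) 0 with hm
  have hm_nonneg : ∀ n, 0 ≤ m n := fun n => le_max_right _ _
  have hA : (inner ℝ (∑ n, (Dp n * lam n) • x n) z : ℝ) = ∑ n, Dp n * lam n * m n := by
    rw [sum_inner]
    refine Finset.sum_congr rfl fun n _ => ?_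
    rw [real_inner_smul_left, ← hzeq n]
  have hB : (inner ℝ (∑ n, (Dm n * lam n) • x n) z : ℝ) = ∑ n, Dm n * lam n * m n := by
    rw [sum_inner]
    refine Finset.sum_congr rfl fun n _ => ?_
    rw [real_inner_smul_left, ← hzeq n]
  have hAle : (inner ℝ (∑ n, (Dp n * lam n) • x n) z : ℝ) ≤ 1 := by
    calc (inner ℝ (∑ n, (Dp n * lam n) • x n) z : ℝ)
        ≤ ‖∑ n, (Dp n * lam n) • x n‖ * ‖z‖ := real_inner_le_norm _ _
      _ ≤ 1 := mul_le_one₀ hDpnorm (norm_nonneg _) hz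
  have hBge : (-1 : ℝ) ≤ (inner ℝ (∑ n, (Dm n * lam n) • x n) z : ℝ) := by
    have h1 : |(inner ℝ (∑ n, (Dm n * lam n) • x n) z : ℝ)| ≤ 1 := by
      calc |(inner ℝ (∑ n, (Dm n * lam n) • x n) z : ℝ)|
          ≤ ‖∑ n, (Dm n * lam n) • x n‖ * ‖z‖ := abs_real_inner_le_norm _ _
        _ ≤ 1 := mul_le_one₀ hDmnorm (norm_nonneg _) hz
    linarith [neg_abs_le (inner ℝ (∑ n, (Dm n * lam n) • x n) z : ℝ)]
  have hSleA : ∑ n, lam n * m n ≤ ∑ n, Dp n * lam n * m n := by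
    refine Finset.sum_le_sum fun n _ => ?_
    rcases hDp01 n with h0 | h1
    · have hyn : y n = -1 := by
        rcases hy n with h | h
        · exact absurd (hDp n h) (by rw [h0]; norm_num)
        · exact h
      have hlamn : lam n ≤ 0 := by
        have := hlam_sign n; rw [hyn] at this; linarith
      rw [h0]
      have : lam n * m n ≤ 0 := mul_nonpos_of_nonpos_of_nonneg hlamn (hm_nonneg n)
      linarith
    · rw [h1, one_mul]
  have hBleS : ∑ n, Dm n * lam n * m n ≤ ∑ n, lam n * m n := by
    refine Finset.sum_le_sum fun n _ => ?_
    rcases hDm01 n with h0 | h1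
    · have hyn : y n = 1 := by
        rcases hy n with h | h
        · exact h
        · exact absurd (hDm n h) (by rw [h0]; norm_num)
      have hlamn : 0 ≤ lam n := by
        have := hlam_sign n; rw [hyn] at this; linarith
      rw [h0]
      have : 0 ≤ lam n * m n := mul_nonneg hlamn (hm_nonneg n)
      linarith
    · rw [h1, one_mul]
  rw [abs_le]
  constructor
  · rw [hB] at hBge; linarith
  · rw [hA] at hAle; linarith
end
end

section
/- (Norm balance is invariant under the coupled flow.) Let g : [0,∞) → ℝ^d be any function and let w_1 : [0,∞) → ℝ^d and w_2 : [0,∞) → ℝ be differentiable curves satisfying w_1′(t) = w_2(t)·g(t) and w_2′(t) = ⟨w_1(t), g(t)⟩ for every t ≥ 0. Then ‖w_1(t)‖₂² − w_2(t)² = ‖w_1(0)‖₂² − w_2(0)² for all t ≥ 0; in particular, if ‖w_1(0)‖₂ = |w_2(0)| then ‖w_1(t)‖₂ = |w_2(t)| for all t ≥ 0. -/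
open scoped BigOperators

noncomputable section

/-- Norm balance is invariant under the coupled flow
`w₁' = w₂ • g`, `w₂' = ⟨w₁, g⟩`. -/
theorem norm_balance_invariant
    {d : ℕ}
    (g : ℝ → EuclideanSpace ℝ (Fin d))
    (w1 : ℝ → EuclideanSpace ℝ (Fin d)) (w2 : ℝ → ℝ)
    (h1 : ∀ t, 0 ≤ t → HasDerivAt w1 (w2 t • g t) t)
    (h2 : ∀ t, 0 ≤ t → HasDerivAt w2 (inner ℝ (w1 t) (g t) : ℝ) t) :
    (∀ t, 0 ≤ t → ‖w1 t‖ ^ 2 - (w2 t) ^ 2 = ‖w1 0‖ ^ 2 - (w2 0) ^ 2) ∧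
    (‖w1 0‖ = |w2 0| → ∀ t, 0 ≤ t → ‖w1 t‖ = |w2 t|) := by
  set f : ℝ → ℝ := fun t => (inner ℝ (w1 t) (w1 t) : ℝ) - w2 t * w2 t with hf
  have key : ∀ t, 0 ≤ t → f t = f 0 := by
    intro t ht
    have hderiv : ∀ x ∈ Set.Ico (0:ℝ) t, HasDerivWithinAt f 0 (Set.Ici x) x := by
      intro x hx
      have hx0 : (0:ℝ) ≤ x := hx.1
      have hd1 := h1 x hx0
      have hd2 := h2 x hx0
      have hA : HasDerivAt (fun s => (inner ℝ (w1 s) (w1 s) : ℝ))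
          ((inner ℝ (w1 x) (w2 x • g x) : ℝ) + (inner ℝ (w2 x • g x) (w1 x) : ℝ)) x :=
        hd1.inner ℝ hd1
      have hB : HasDerivAt (fun s => w2 s * w2 s)
          ((inner ℝ (w1 x) (g x) : ℝ) * w2 x + w2 x * (inner ℝ (w1 x) (g x) : ℝ)) x :=
        hd2.mul hd2
      have h : HasDerivAt f 0 x := by
        have := hA.sub hB
        refine this.congr_deriv ?_
        rw [real_inner_smul_right, real_inner_smul_left, real_inner_comm (g x) (w1 x)]
        ring
      exact h.hasDerivWithinAt
    have hcont : ContinuousOn f (Set.Icc 0 t) := by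
      intro x hx
      have hx0 : (0:ℝ) ≤ x := hx.1
      have : HasDerivAt f 0 x := by
        have hd1 := h1 x hx0
        have hd2 := h2 x hx0
        have hA := hd1.inner ℝ hd1
        have hB := hd2.mul hd2
        have := hA.sub hB
        refine this.congr_deriv ?_
        rw [real_inner_smul_right, real_inner_smul_left, real_inner_comm (g x) (w1 x)]
        ring
      exact this.continuousAt.continuousWithinAt
    exact constant_of_has_deriv_right_zero hcont hderiv t (Set.right_mem_Icc.mpr ht)
  have key' : ∀ t, 0 ≤ t → ‖w1 t‖ ^ 2 - (w2 t) ^ 2 = ‖w1 0‖ ^ 2 - (w2 0) ^ 2 := by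
    intro t ht
    have := key t ht
    simp only [hf, real_inner_self_eq_norm_sq] at this
    nlinarith [this]
  refine ⟨key', fun h0 t ht => ?_⟩
  have := key' t ht
  rw [h0] at this
  have hsq : ‖w1 t‖ ^ 2 = (w2 t) ^ 2 := by nlinarith [sq_abs (w2 0)]
  calc ‖w1 t‖ = Real.sqrt (‖w1 t‖ ^ 2) := by rw [Real.sqrt_sq (norm_nonneg _)]
    _ = Real.sqrt ((w2 t) ^ 2) := by rw [hsq]
    _ = |w2 t| := Real.sqrt_sq_eq_abs _
end
end

section
/- Consider differentiable trajectories w_{1,i} : [0,∞) → ℝ^d and w_{2,i} : [0,∞) → ℝ (i = 1,…,m) satisfying the subgradient flow equations of the logistic loss at every t ≥ 0, namely d/dt w_{1,i}(t) = w_{2,i}(t) · Σ_{n : x_nᵀw_{1,i}(t) > 0} λ̃_n(t) x_n and d/dt w_{2,i}(t) = Σ_{n=1}^N λ̃_n(t) (x_nᵀw_{1,i}(t))_+. If ‖w_{1,i}(0)‖₂ = |w_{2,i}(0)| > 0 for every i ∈ {1,…,m}, then for every t ≥ 0 and every i, ‖w_{1,i}(t)‖₂ = |w_{2,i}(t)|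 > 0; in particular the sign of w_{2,i}(t) equals the sign of w_{2,i}(0) for all t ≥ 0. -/
open scoped BigOperators

noncomputable section

/-- Derivative of the logistic loss `ℓ(q) = log(1 + exp(−q))`: `ℓ'(q) = −1/(1 + exp q)`. -/
def logisticDeriv (q : ℝ) : ℝ := -(1 + Real.exp q)⁻¹

/-- Network margin output `q_n = y_n Σ_i (x_nᵀ w_{1,i})₊ w_{2,i}`. -/
def qOut {N d m : ℕ} (x : Fin N → EuclideanSpace ℝ (Fin d)) (y : Fin N → ℝ)
    (w1 : Fin m → EuclideanSpace ℝ (Fin d)) (w2 : Fin m → ℝ) (n : Fin N) : ℝ :=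
  y n * ∑ i, max (inner ℝ (x n) (w1 i) : ℝ) 0 * w2 i

/-- `λ̃_n = −y_n ℓ'(q_n)`. -/
def lamTilde {N d m : ℕ} (x : Fin N → EuclideanSpace ℝ (Fin d)) (y : Fin N → ℝ)
    (w1 : Fin m → EuclideanSpace ℝ (Fin d)) (w2 : Fin m → ℝ) (n : Fin N) : ℝ :=
  -(y n) * logisticDeriv (qOut x y w1 w2 n)

/-- Lemma `lem:sign`: along the subgradient flow of the logistic loss, a
scaled initialization `‖w₁ᵢ(0)‖ = |w₂ᵢ(0)| > 0` stays scaled and nonvanishing for all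
`t ≥ 0`; in particular the sign of `w₂ᵢ(t)` is constant. -/
theorem scaled_initialization_preserved
    {N d m : ℕ}
    (x : Fin N → EuclideanSpace ℝ (Fin d)) (y : Fin N → ℝ)
    (hy : ∀ n, y n = 1 ∨ y n = -1)
    (w1 : Fin m → ℝ → EuclideanSpace ℝ (Fin d)) (w2 : Fin m → ℝ → ℝ)
    (hflow1 : ∀ i, ∀ t, 0 ≤ t → HasDerivAt (w1 i)
      (w2 i t • ∑ n ∈ Finset.univ.filter (fun n => 0 < (inner ℝ (x n) (w1 i t) : ℝ)),
        lamTilde x y (fun j => w1 j t) (fun j => w2 j t) n • x n) t)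
    (hflow2 : ∀ i, ∀ t, 0 ≤ t → HasDerivAt (w2 i)
      (∑ n, lamTilde x y (fun j => w1 j t) (fun j => w2 j t) n *
        max (inner ℝ (x n) (w1 i t) : ℝ) 0) t)
    (hinit : ∀ i, ‖w1 i 0‖ = |w2 i 0| ∧ 0 < |w2 i 0|) :
    ∀ t, 0 ≤ t → ∀ i,
      (‖w1 i t‖ = |w2 i t| ∧ 0 < |w2 i t|) ∧
      Real.sign (w2 i t) = Real.sign (w2 i 0) := by
  classical
  set C : ℝ := ∑ n, ‖x n‖ with hC
  -- |lamTilde| ≤ 1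
  have hlam : ∀ (W1 : Fin m → EuclideanSpace ℝ (Fin d)) (W2 : Fin m → ℝ) (n : Fin N),
      |lamTilde x y W1 W2 n| ≤ 1 := by
    intro W1 W2 n
    have hy' : |y n| = 1 := by rcases hy n with h | h <;> simp [h]
    have hexp : (0:ℝ) < 1 + Real.exp (qOut x y W1 W2 n) := by positivity
    rw [lamTilde, logisticDeriv, abs_mul, abs_neg, hy', one_mul, abs_neg, abs_inv,
      abs_of_pos hexp]
    rw [inv_le_one_iff₀]
    right; linarith [(Real.exp_pos (qOut x y W1 W2 n)).le]
  -- derivative bound for w2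
  have hbound : ∀ i t, 0 ≤ t →
      |∑ n, lamTilde x y (fun j => w1 j t) (fun j => w2 j t) n *
        max (inner ℝ (x n) (w1 i t) : ℝ) 0| ≤ C * ‖w1 i t‖ := by
    intro i t ht
    calc |∑ n, lamTilde x y (fun j => w1 j t) (fun j => w2 j t) n *
            max (inner ℝ (x n) (w1 i t) : ℝ) 0|
        ≤ ∑ n, |lamTilde x y (fun j => w1 j t) (fun j => w2 j t) n *
            max (inner ℝ (x n) (w1 i t) : ℝ) 0| := Finset.abs_sum_le_sum_abs _ _
      _ ≤ ∑ n, ‖x n‖ * ‖w1 i t‖ := by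
          apply Finset.sum_le_sum
          intro n _
          rw [abs_mul]
          have h1 : |max (inner ℝ (x n) (w1 i t) : ℝ) 0| ≤ ‖x n‖ * ‖w1 i t‖ := by
            rw [abs_of_nonneg (le_max_right _ _)]
            exact le_trans (max_le (le_abs_self _) (by positivity))
              (by simpa using abs_real_inner_le_norm (x n) (w1 i t))
          calc |lamTilde x y (fun j => w1 j t) (fun j => w2 j t) n| *
                |max (inner ℝ (x n) (w1 i t) : ℝ) 0|
              ≤ 1 * (‖x n‖ * ‖w1 i t‖) :=
                mul_le_mul (hlam _ _ _) h1 (abs_nonneg _) zero_le_one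
            _ = ‖x n‖ * ‖w1 i t‖ := one_mul _
      _ = C * ‖w1 i t‖ := by rw [hC, Finset.sum_mul]
  -- zero derivative of the balance function
  have hderiv0 : ∀ i t, 0 ≤ t →
      HasDerivAt (fun s => ‖w1 i s‖^2 - (w2 i s)^2) 0 t := by
    intro i t ht
    set lam : Fin N → ℝ := lamTilde x y (fun j => w1 j t) (fun j => w2 j t) with hlamdef
    set S := Finset.univ.filter (fun n => 0 < (inner ℝ (x n) (w1 i t) : ℝ)) with hSdef
    set v : EuclideanSpace ℝ (Fin d) := w2 i t • ∑ n ∈ S, lam n • x n with hv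
    set u : ℝ := ∑ n, lam n * max (inner ℝ (x n) (w1 i t) : ℝ) 0 with hu
    have h1 : HasDerivAt (w1 i) v t := hflow1 i t ht
    have h2 : HasDerivAt (w2 i) u t := hflow2 i t ht
    have hinner : HasDerivAt (fun s => (inner ℝ (w1 i s) (w1 i s) : ℝ))
        ((inner ℝ (w1 i t) v : ℝ) + (inner ℝ v (w1 i t) : ℝ)) t := h1.inner ℝ h1
    have hsq : HasDerivAt (fun s => (w2 i s)^2) (2 * w2 i t ^ 1 * u) t := h2.pow 2
    have hnorm : HasDerivAt (fun s => ‖w1 i s‖^2)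
        ((inner ℝ (w1 i t) v : ℝ) + (inner ℝ v (w1 i t) : ℝ)) t := by
      simpa only [real_inner_self_eq_norm_sq] using hinner
    have hval : (inner ℝ (w1 i t) v : ℝ) + (inner ℝ v (w1 i t) : ℝ) - 2 * w2 i t ^ 1 * u = 0 := by
      have hvw : (inner ℝ v (w1 i t) : ℝ) = w2 i t * ∑ n ∈ S, lam n * (inner ℝ (x n) (w1 i t) : ℝ) := by
        rw [hv, real_inner_smul_left, sum_inner]
        congr 1
        exact Finset.sum_congr rfl fun n _ => real_inner_smul_left _ _ _
      have hcomm : (inner ℝ (w1 i t) v : ℝ) = (inner ℝ v (w1 i t) : ℝ) := real_inner_comm _ _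
      have huS : u = ∑ n ∈ S, lam n * (inner ℝ (x n) (w1 i t) : ℝ) := by
        rw [hu, ← Finset.sum_filter_add_sum_filter_not Finset.univ
          (fun n => 0 < (inner ℝ (x n) (w1 i t) : ℝ))]
        rw [← hSdef]
        have hz : ∑ n ∈ Finset.univ.filter
            (fun n => ¬ 0 < (inner ℝ (x n) (w1 i t) : ℝ)),
            lam n * max (inner ℝ (x n) (w1 i t) : ℝ) 0 = 0 := by
          apply Finset.sum_eq_zero
          intro n hn
          rw [Finset.mem_filter] at hn
          rw [max_eq_right (le_of_not_gt hn.2), mul_zero]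
        rw [hz, add_zero]
        exact Finset.sum_congr rfl fun n hn => by
          rw [Finset.mem_filter] at hn
          rw [max_eq_left hn.2.le]
      rw [hcomm, hvw, huS]; ring
    have := hnorm.sub hsq
    rwa [hval] at this
  -- balancedness
  have hbal : ∀ t, 0 ≤ t → ∀ i, ‖w1 i t‖ = |w2 i t| := by
    intro t ht i
    have hconst : ‖w1 i t‖^2 - (w2 i t)^2 = ‖w1 i 0‖^2 - (w2 i 0)^2 := by
      have := constant_of_has_deriv_right_zero
        (f := fun s => ‖w1 i s‖^2 - (w2 i s)^2) (a := 0) (b := t)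
        (fun s hs => ((hderiv0 i s hs.1).continuousAt).continuousWithinAt)
        (fun s hs => (hderiv0 i s hs.1).hasDerivWithinAt)
      exact this t (Set.mem_Icc.mpr ⟨ht, le_rfl⟩)
    have h0 : ‖w1 i 0‖^2 = (w2 i 0)^2 := by rw [(hinit i).1, sq_abs]
    have ht2 : ‖w1 i t‖^2 = (w2 i t)^2 := by linarith
    have : ‖w1 i t‖^2 = |w2 i t|^2 := by rw [ht2, sq_abs]
    calc ‖w1 i t‖ = Real.sqrt (‖w1 i t‖^2) := (Real.sqrt_sq (norm_nonneg _)).symm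
      _ = Real.sqrt (|w2 i t|^2) := by rw [this]
      _ = |w2 i t| := Real.sqrt_sq (abs_nonneg _)
  -- nonvanishing via Gronwall
  have hnz : ∀ t, 0 ≤ t → ∀ i, w2 i t ≠ 0 := by
    intro T hT i hzero
    set f : ℝ → ℝ := fun s => w2 i (T - s) with hf
    have hD : ∀ s ∈ Set.Ico (0:ℝ) T, HasDerivWithinAt f
        ((∑ n, lamTilde x y (fun j => w1 j (T - s)) (fun j => w2 j (T - s)) n *
          max (inner ℝ (x n) (w1 i (T - s)) : ℝ) 0) * (-1)) (Set.Ici s) s := by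
      intro s hs
      have hts : (0:ℝ) ≤ T - s := by linarith [hs.2.le]
      have hc : HasDerivAt (fun s : ℝ => T - s) (-1 : ℝ) s := by
        have h := (hasDerivAt_const s T).sub (hasDerivAt_id s); rw [zero_sub] at h; exact h
      exact ((hflow2 i (T - s) hts).comp s hc).hasDerivWithinAt
    have hcont : ContinuousOn f (Set.Icc 0 T) := by
      intro s hs
      have hts : (0:ℝ) ≤ T - s := by linarith [hs.2]
      have hc : HasDerivAt (fun s : ℝ => T - s) (-1 : ℝ) s := by
        have h := (hasDerivAt_const s T).sub (hasDerivAt_id s); rw [zero_sub] at h; exact h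
      exact (((hflow2 i (T - s) hts).comp s hc).continuousAt).continuousWithinAt
    have ha : ‖f 0‖ ≤ 0 := by simp [hf, hzero]
    have hb : ∀ s ∈ Set.Ico (0:ℝ) T,
        ‖(∑ n, lamTilde x y (fun j => w1 j (T - s)) (fun j => w2 j (T - s)) n *
          max (inner ℝ (x n) (w1 i (T - s)) : ℝ) 0) * (-1)‖ ≤ C * ‖f s‖ + 0 := by
      intro s hs
      have hts : (0:ℝ) ≤ T - s := by linarith [hs.2.le]
      rw [add_zero]
      calc ‖(∑ n, lamTilde x y (fun j => w1 j (T - s)) (fun j => w2 j (T - s)) n *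
              max (inner ℝ (x n) (w1 i (T - s)) : ℝ) 0) * (-1)‖
          = |∑ n, lamTilde x y (fun j => w1 j (T - s)) (fun j => w2 j (T - s)) n *
              max (inner ℝ (x n) (w1 i (T - s)) : ℝ) 0| := by
            rw [Real.norm_eq_abs, mul_neg_one, abs_neg]
        _ ≤ C * ‖w1 i (T - s)‖ := hbound i (T - s) hts
        _ = C * ‖f s‖ := by rw [hbal (T - s) hts i, hf]; simp [Real.norm_eq_abs]
    have := norm_le_gronwallBound_of_norm_deriv_right_le hcont hD ha hb T
      (Set.mem_Icc.mpr ⟨hT, le_rfl⟩)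
    rw [gronwallBound_ε0, zero_mul] at this
    have hf0 : f T = w2 i 0 := by simp [hf]
    have : |w2 i 0| ≤ 0 := by rwa [hf0, Real.norm_eq_abs] at this
    exact absurd ((hinit i).2.trans_le this) (lt_irrefl 0)
  -- conclude
  intro t ht i
  have habs : 0 < |w2 i t| := abs_pos.mpr (hnz t ht i)
  refine ⟨⟨hbal t ht i, habs⟩, ?_⟩
  have hcont : ContinuousOn (w2 i) (Set.Icc 0 t) :=
    fun s hs => ((hflow2 i s hs.1).continuousAt).continuousWithinAt
  have hsame : ∀ s ∈ Set.Icc (0:ℝ) t, w2 i s ≠ 0 := fun s hs => hnz s hs.1 i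
  rcases lt_or_gt_of_ne (hnz 0 le_rfl i) with h0 | h0
  · -- w2 i 0 < 0
    have hneg : w2 i t < 0 := by
      by_contra h
      push_neg at h
      have htpos : 0 < w2 i t := lt_of_le_of_ne h (Ne.symm (hnz t ht i))
      have : (0:ℝ) ∈ Set.Icc (w2 i 0) (w2 i t) := ⟨h0.le, htpos.le⟩
      obtain ⟨s, hs, hs0⟩ := intermediate_value_Icc ht hcont this
      exact hsame s hs hs0
    rw [Real.sign_of_neg hneg, Real.sign_of_neg h0]
  · have hpos : 0 < w2 i t := by
      by_contra h
      push_neg at h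
      have htneg : w2 i t < 0 := lt_of_le_of_ne h (hnz t ht i)
      have : (0:ℝ) ∈ Set.Icc (w2 i t) (w2 i 0) := ⟨htneg.le, h0.le⟩
      obtain ⟨s, hs, hs0⟩ := intermediate_value_Icc' ht hcont this
      exact hsame s hs hs0
    rw [Real.sign_of_pos hpos, Real.sign_of_pos h0]
end
end

section
/- Assume the dataset (X,y) is orthogonally separable and let B = {w ∈ ℝ^d : ‖w‖₂ ≤ 1}. If w ∈ B is a local maximizer over B of the function u ↦ yᵀ(Xu)_+ = Σ_{n=1}^N y_n (x_nᵀu)_+ and (Xw)_+ ≠ 0, then ⟨w, x_n⟩ > 0 for every n with y_n = 1. If w ∈ B is a local minimizer over B of the same function and (Xw)_+ ≠ 0, then ⟨w, x_n⟩ > 0 for every n with y_n = −1. -/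
open scoped BigOperators

set_option maxHeartbeats 1000000

noncomputable section

private lemma f_smul_aux {N d : ℕ} (x : Fin N → EuclideanSpace ℝ (Fin d)) (y : Fin N → ℝ)
    (c : ℝ) (hc : 0 ≤ c) (v : EuclideanSpace ℝ (Fin d)) :
    ∑ n, y n * max (inner ℝ (x n) (c • v) : ℝ) 0 = c * ∑ n, y n * max (inner ℝ (x n) v : ℝ) 0 := by
  rw [Finset.mul_sum]
  refine Finset.sum_congr rfl fun n _ => ?_
  rw [real_inner_smul_right]
  have : c * max (inner ℝ (x n) v : ℝ) 0 = max (c * (inner ℝ (x n) v : ℝ)) (c * 0) :=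
    mul_max_of_nonneg _ _ hc
  rw [mul_zero] at this
  rw [← this]
  ring

private lemma aux_local_max
    {N d : ℕ}
    (x : Fin N → EuclideanSpace ℝ (Fin d)) (y : Fin N → ℝ)
    (hy : ∀ n, y n = 1 ∨ y n = -1)
    (hsep_same : ∀ n n', y n = y n' → 0 < (inner ℝ (x n) (x n') : ℝ))
    (hsep_diff : ∀ n n', y n ≠ y n' → (inner ℝ (x n) (x n') : ℝ) ≤ 0)
    (w : EuclideanSpace ℝ (Fin d)) (hw : ‖w‖ ≤ 1)
    (hnz : ∃ n, 0 < max (inner ℝ (x n) w : ℝ) 0)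
    (hmax : ∃ r > (0:ℝ), ∀ u : EuclideanSpace ℝ (Fin d), ‖u‖ ≤ 1 → ‖u - w‖ < r →
        ∑ n, y n * max (inner ℝ (x n) u : ℝ) 0 ≤ ∑ n, y n * max (inner ℝ (x n) w : ℝ) 0) :
    ∀ n, y n = 1 → 0 < (inner ℝ w (x n) : ℝ) := by
  obtain ⟨r, hr, hloc⟩ := hmax
  obtain ⟨F, hFdef⟩ : ∃ F : ℝ, F = ∑ n, y n * max (inner ℝ (x n) w : ℝ) 0 := ⟨_, rfl⟩
  rw [← hFdef] at hloc
  -- Step 1 : F ≥ 0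
  have hF : 0 ≤ F := by
    obtain ⟨ε, hε0, hεr, hε1⟩ : ∃ ε : ℝ, 0 < ε ∧ ε < r ∧ ε ≤ 1 := by
      refine ⟨min r 1 / 2, by positivity, ?_, ?_⟩
      · have : min r 1 ≤ r := min_le_left _ _
        linarith
      · have : min r 1 ≤ 1 := min_le_right _ _
        linarith
    have hnorm : ‖(1 - ε) • w‖ ≤ 1 := by
      rw [norm_smul, Real.norm_eq_abs, abs_of_nonneg (by linarith)]
      nlinarith [norm_nonneg w]
    have hclose : ‖(1 - ε) • w - w‖ < r := by
      have heq : (1 - ε) • w - w = (-ε) • w := by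
        rw [sub_smul, one_smul, neg_smul]; abel
      rw [heq, norm_smul, Real.norm_eq_abs, abs_neg, abs_of_nonneg hε0.le]
      nlinarith [norm_nonneg w]
    have h1 := hloc ((1 - ε) • w) hnorm hclose
    rw [f_smul_aux x y (1 - ε) (by linarith) w, ← hFdef] at h1
    nlinarith
  -- Step 2 : there is a positively-labeled active point
  have hex : ∃ m, y m = 1 ∧ 0 < (inner ℝ (x m) w : ℝ) := by
    by_contra hcon
    push_neg at hcon
    obtain ⟨n1, hn1⟩ := hnz
    have hn1' : 0 < (inner ℝ (x n1) w : ℝ) := by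
      rcases lt_max_iff.mp hn1 with h | h
      · exact h
      · exact absurd h (lt_irrefl 0)
    have hy1 : y n1 = -1 :=
      (hy n1).resolve_left (fun h => absurd hn1' (not_lt.mpr (hcon n1 h)))
    have hFneg : F < 0 := by
      have hlt : ∑ n, y n * max (inner ℝ (x n) w : ℝ) 0 < ∑ _n : Fin N, (0:ℝ) := by
        refine Finset.sum_lt_sum (fun n _ => ?_) ⟨n1, Finset.mem_univ n1, ?_⟩
        · rcases hy n with h | h
          · rw [h, one_mul, max_eq_right (hcon n h)]
          · have h2 : (0:ℝ) ≤ max (inner ℝ (x n) w : ℝ) 0 := le_max_right _ _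
            rw [h]; nlinarith
        · rw [hy1, max_eq_left hn1'.le]; nlinarith
      rw [Finset.sum_const_zero] at hlt
      rw [hFdef]; exact hlt
    linarith
  obtain ⟨m, hm1, hmw⟩ := hex
  -- Step 3 : suppose some positively-labeled point has nonpositive correlation
  intro n0 hn0y
  by_contra hcontra
  push_neg at hcontra
  have hn0w : (inner ℝ w (x n0) : ℝ) ≤ 0 := hcontra
  obtain ⟨A, hAdef⟩ : ∃ A : ℝ, A = inner ℝ (x m) (x n0) := ⟨_, rfl⟩
  have hA : 0 < A := hAdef ▸ hsep_same m n0 (hm1.trans hn0y.symm)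
  obtain ⟨L, hLdef⟩ : ∃ L : ℝ, L = ‖x n0‖ := ⟨_, rfl⟩
  obtain ⟨B, hBdef⟩ : ∃ B : ℝ, B = L ^ 2 := ⟨_, rfl⟩
  have hL : 0 < L := by
    have h := hsep_same n0 n0 rfl
    rw [real_inner_self_eq_norm_sq, ← hLdef] at h
    have hLnn : 0 ≤ L := hLdef ▸ norm_nonneg (x n0)
    nlinarith
  have hB : 0 < B := by nlinarith
  have hd1 : (0:ℝ) < 1 + B := by linarith
  have hd2 : (0:ℝ) < 1 + B + L := by linarith
  have hd3 : (0:ℝ) < 1 + B * F := by nlinarith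
  -- choose the step size t
  obtain ⟨t, ht0, ht1, ht2, ht3, ht4⟩ :
      ∃ t : ℝ, 0 < t ∧ t ≤ 1 ∧ t * (1 + B) ≤ 1 ∧ t * (1 + B + L) < r ∧ t * (1 + B * F) < A := by
    refine ⟨min (min 1 (1 / (1 + B))) (min (r / (1 + B + L)) (A / (1 + B * F))) / 2,
      ?_, ?_, ?_, ?_, ?_⟩
    · have h1 : (0:ℝ) < min 1 (1 / (1 + B)) := lt_min one_pos (div_pos one_pos hd1)
      have h2 : (0:ℝ) < min (r / (1 + B + L)) (A / (1 + B * F)) :=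
        lt_min (div_pos hr hd2) (div_pos hA hd3)
      have := lt_min h1 h2
      linarith
    · have h1 : min (min 1 (1 / (1 + B))) (min (r / (1 + B + L)) (A / (1 + B * F))) ≤ 1 :=
        le_trans (min_le_left _ _) (min_le_left _ _)
      linarith
    · have h1 : min (min 1 (1 / (1 + B))) (min (r / (1 + B + L)) (A / (1 + B * F)))
          ≤ 1 / (1 + B) :=
        le_trans (min_le_left _ _) (min_le_right _ _)
      have h2 : (1 / (1 + B)) * (1 + B) = 1 := by field_simp
      nlinarith
    · have h1 : min (min 1 (1 / (1 + B))) (min (r / (1 + B + L)) (A / (1 + B * F)))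
          ≤ r / (1 + B + L) :=
        le_trans (min_le_right _ _) (min_le_left _ _)
      have h2 : (r / (1 + B + L)) * (1 + B + L) = r := by field_simp
      have h3 : 0 < r / (1 + B + L) := div_pos hr hd2
      nlinarith
    · have h1 : min (min 1 (1 / (1 + B))) (min (r / (1 + B + L)) (A / (1 + B * F)))
          ≤ A / (1 + B * F) :=
        le_trans (min_le_right _ _) (min_le_right _ _)
      have h2 : (A / (1 + B * F)) * (1 + B * F) = A := by field_simp
      have h3 : 0 < A / (1 + B * F) := div_pos hA hd3
      nlinarith
  -- scaling factor
  obtain ⟨c, hcdef⟩ : ∃ c : ℝ, c = 1 - t ^ 2 * B / 2 := ⟨_, rfl⟩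
  have hs1 : t ^ 2 * B ≤ 1 := by nlinarith
  have hs0 : 0 ≤ t ^ 2 * B := by positivity
  have hc0 : (1:ℝ)/2 ≤ c := by rw [hcdef]; linarith
  have hc1 : c ≤ 1 := by rw [hcdef]; linarith
  have hc2 : 0 ≤ c := by linarith
  -- norm of w + t • x n0
  have hnwt : ‖w + t • x n0‖ ^ 2 ≤ 1 + t ^ 2 * B := by
    rw [norm_add_sq_real, real_inner_smul_right, norm_smul, Real.norm_eq_abs,
      abs_of_nonneg ht0.le, mul_pow, ← hLdef]
    have h1 : ‖w‖ ^ 2 ≤ 1 := by nlinarith [norm_nonneg w]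
    nlinarith
  -- the perturbed point is in the ball
  have hunorm : ‖c • (w + t • x n0)‖ ≤ 1 := by
    have h1 : ‖c • (w + t • x n0)‖ = c * ‖w + t • x n0‖ := by
      rw [norm_smul, Real.norm_eq_abs, abs_of_nonneg hc2]
    have haux1 : 0 ≤ c ^ 2 * ((1 + t ^ 2 * B) - ‖w + t • x n0‖ ^ 2) :=
      mul_nonneg (sq_nonneg c) (by linarith)
    have haux2 : 0 ≤ (t ^ 2 * B) ^ 2 * (1 - t ^ 2 * B) :=
      mul_nonneg (sq_nonneg _) (by linarith)
    have h2 : ‖c • (w + t • x n0)‖ ^ 2 ≤ 1 := by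
      rw [h1, mul_pow, hcdef]
      rw [hcdef] at haux1
      nlinarith [sq_nonneg (t ^ 2 * B)]
    nlinarith [norm_nonneg (c • (w + t • x n0))]
  -- the perturbed point is close to w
  have huclose : ‖c • (w + t • x n0) - w‖ < r := by
    have h1 : c • (w + t • x n0) - w = (c - 1) • w + (c * t) • x n0 := by
      rw [smul_add, smul_smul, sub_smul, one_smul]
      abel
    rw [h1]
    have h2 : ‖(c - 1) • w + (c * t) • x n0‖ ≤ ‖(c - 1) • w‖ + ‖(c * t) • x n0‖ :=
      norm_add_le _ _
    rw [norm_smul, norm_smul, Real.norm_eq_abs, Real.norm_eq_abs,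
      abs_of_nonpos (by linarith : c - 1 ≤ 0), abs_of_nonneg (by positivity : 0 ≤ c * t),
      ← hLdef] at h2
    have h3 : -(c - 1) * ‖w‖ ≤ t ^ 2 * B / 2 := by
      rw [hcdef]
      nlinarith [norm_nonneg w]
    have h4 : c * t * L ≤ t * L := by
      nlinarith [mul_nonneg (mul_nonneg (sub_nonneg.mpr hc1) ht0.le) hL.le]
    have h5 : t ^ 2 * B / 2 + t * L ≤ t * (1 + B + L) := by nlinarith
    linarith
  -- the objective increases along the perturbation
  have hinner_u : ∀ n, (inner ℝ (x n) (w + t • x n0) : ℝ)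
      = inner ℝ (x n) w + t * inner ℝ (x n) (x n0) := fun n => by
    rw [inner_add_right, real_inner_smul_right]
  have hpt : ∀ n, y n * max (inner ℝ (x n) w : ℝ) 0 + (if n = m then t * A else 0)
      ≤ y n * max ((inner ℝ (x n) w : ℝ) + t * inner ℝ (x n) (x n0)) 0 := by
    intro n
    rcases eq_or_ne n m with rfl | hne
    · simp only [if_pos rfl, hm1, one_mul]
      rw [max_eq_left hmw.le, ← hAdef, max_eq_left (by nlinarith)]
      simp
    · rw [if_neg hne, add_zero]
      rcases hy n with h | h
      · have hpos : 0 < (inner ℝ (x n) (x n0) : ℝ) := hsep_same n n0 (h.trans hn0y.symm)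
        rw [h, one_mul, one_mul]
        exact max_le_max (by nlinarith) le_rfl
      · have hneg : (inner ℝ (x n) (x n0) : ℝ) ≤ 0 :=
          hsep_diff n n0 (by rw [h, hn0y]; norm_num)
        have hmle : max ((inner ℝ (x n) w : ℝ) + t * inner ℝ (x n) (x n0)) 0
            ≤ max (inner ℝ (x n) w : ℝ) 0 := max_le_max (by nlinarith) le_rfl
        rw [h]
        nlinarith
  have hsum : F + t * A ≤ ∑ n, y n * max ((inner ℝ (x n) (w + t • x n0)) : ℝ) 0 := by
    have hrw : ∀ n : Fin N, y n * max ((inner ℝ (x n) (w + t • x n0)) : ℝ) 0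
        = y n * max ((inner ℝ (x n) w : ℝ) + t * inner ℝ (x n) (x n0)) 0 := fun n => by
      rw [hinner_u n]
    rw [Finset.sum_congr rfl (fun n _ => hrw n)]
    calc F + t * A
        = ∑ n, (y n * max (inner ℝ (x n) w : ℝ) 0 + if n = m then t * A else 0) := by
          rw [Finset.sum_add_distrib, Finset.sum_ite_eq' Finset.univ m (fun _ => t * A),
            if_pos (Finset.mem_univ m), hFdef]
      _ ≤ _ := Finset.sum_le_sum fun n _ => hpt n
  have hfu : ∑ n, y n * max ((inner ℝ (x n) (c • (w + t • x n0))) : ℝ) 0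
      = c * ∑ n, y n * max ((inner ℝ (x n) (w + t • x n0)) : ℝ) 0 :=
    f_smul_aux x y c hc2 _
  have hfin := hloc (c • (w + t • x n0)) hunorm huclose
  rw [hfu] at hfin
  have hge : c * (F + t * A) ≤ c * ∑ n, y n * max ((inner ℝ (x n) (w + t • x n0)) : ℝ) 0 :=
    mul_le_mul_of_nonneg_left hsum hc2
  have hstrict : F < c * (F + t * A) := by
    rw [hcdef]
    nlinarith [mul_pos ht0 hA, mul_nonneg (mul_nonneg ht0.le ht0.le) hF,
      mul_nonneg hs0 hF, mul_pos (mul_pos ht0 ht0) hA]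
  linarith

/-- Lemma `lem:ortho_cond_max`: on orthogonally separable data, a local
maximizer `w` of `u ↦ yᵀ(Xu)₊` over the unit ball with `(Xw)₊ ≠ 0` has positive correlation
with every positively-labeled point; a local minimizer with `(Xw)₊ ≠ 0` has positive
correlation with every negatively-labeled point. -/
theorem local_extrema_correlation_orthogonal_separable
    {N d : ℕ}
    (x : Fin N → EuclideanSpace ℝ (Fin d)) (y : Fin N → ℝ)
    (hy : ∀ n, y n = 1 ∨ y n = -1)
    (hsep_same : ∀ n n', y n = y n' → 0 < (inner ℝ (x n) (x n') : ℝ))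
    (hsep_diff : ∀ n n', y n ≠ y n' → (inner ℝ (x n) (x n') : ℝ) ≤ 0)
    (w : EuclideanSpace ℝ (Fin d)) (hw : ‖w‖ ≤ 1)
    (hnz : ∃ n, 0 < max (inner ℝ (x n) w : ℝ) 0) :
    ((∃ r > (0:ℝ), ∀ u : EuclideanSpace ℝ (Fin d), ‖u‖ ≤ 1 → ‖u - w‖ < r →
        ∑ n, y n * max (inner ℝ (x n) u : ℝ) 0 ≤ ∑ n, y n * max (inner ℝ (x n) w : ℝ) 0) →
      ∀ n, y n = 1 → 0 < (inner ℝ w (x n) : ℝ)) ∧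
    ((∃ r > (0:ℝ), ∀ u : EuclideanSpace ℝ (Fin d), ‖u‖ ≤ 1 → ‖u - w‖ < r →
        ∑ n, y n * max (inner ℝ (x n) w : ℝ) 0 ≤ ∑ n, y n * max (inner ℝ (x n) u : ℝ) 0) →
      ∀ n, y n = -1 → 0 < (inner ℝ w (x n) : ℝ)) := by
  constructor
  · intro hmax
    exact aux_local_max x y hy hsep_same hsep_diff w hw hnz hmax
  · intro hmin n hn
    have hy' : ∀ k, -(y k) = 1 ∨ -(y k) = -1 := by
      intro k; rcases hy k with h | h
      · right; rw [h]
      · left; rw [h]; norm_num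
    have hsame' : ∀ a b : Fin N, -(y a) = -(y b) → 0 < (inner ℝ (x a) (x b) : ℝ) := by
      intro a b hab
      exact hsep_same a b (neg_injective hab)
    have hdiff' : ∀ a b : Fin N, -(y a) ≠ -(y b) → (inner ℝ (x a) (x b) : ℝ) ≤ 0 := by
      intro a b hab
      exact hsep_diff a b (fun h => hab (by rw [h]))
    have hmax' : ∃ r > (0:ℝ), ∀ u : EuclideanSpace ℝ (Fin d), ‖u‖ ≤ 1 → ‖u - w‖ < r →
        ∑ k, -(y k) * max (inner ℝ (x k) u : ℝ) 0 ≤ ∑ k, -(y k) * max (inner ℝ (x k) w : ℝ) 0 := by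
      obtain ⟨r, hr, hloc⟩ := hmin
      refine ⟨r, hr, fun u hu hd => ?_⟩
      have h := hloc u hu hd
      have e1 : ∑ k, -(y k) * max (inner ℝ (x k) u : ℝ) 0
          = -∑ k, y k * max (inner ℝ (x k) u : ℝ) 0 := by
        rw [← Finset.sum_neg_distrib]
        exact Finset.sum_congr rfl fun k _ => by ring
      have e2 : ∑ k, -(y k) * max (inner ℝ (x k) w : ℝ) 0
          = -∑ k, y k * max (inner ℝ (x k) w : ℝ) 0 := by
        rw [← Finset.sum_neg_distrib]
        exact Finset.sum_congr rfl fun k _ => by ring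
      rw [e1, e2]
      linarith
    have := aux_local_max x (fun k => -(y k)) hy' hsame' hdiff' w hw hnz hmax' n
      (by show -(y n) = 1; rw [hn]; norm_num)
    exact this
end
end

section
/- Assume the dataset (X,y) is orthogonally separable, let B = {w ∈ ℝ^d : ‖w‖₂ ≤ 1}, and let u ∈ ℝ^d with ‖u‖₂ = 1 and g(u,y) ≠ 0, where g(u,y) = Σ_{n : x_nᵀu > 0} y_n x_n. Then u is a local maximizer over B of v ↦ yᵀ(Xv)_+ if and only if u = g(u,y)/‖g(u,y)‖₂ (i.e. cos∠(u, g(u,y)) = 1); and u is a local minimizer over B of v ↦ yᵀ(Xv)_+ if and only if u = −g(u,y)/‖g(u,y)‖₂ (i.e. cos∠(u, g(u,y)) = −1). -/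
open scoped BigOperators

noncomputable section

lemma sign_iff' {A B : ℝ} (h : |A - B| < |B|) : (0 < A ↔ 0 < B) := by
  rcases lt_trichotomy B 0 with hb | hb | hb
  · rw [abs_of_neg hb, abs_lt] at h
    constructor <;> intro <;> linarith
  · simp [hb] at h
    exact absurd h (abs_nonneg A).not_gt
  · rw [abs_of_pos hb, abs_lt] at h
    constructor <;> intro <;> linarith

lemma perturb {d : ℕ} (u w : EuclideanSpace ℝ (Fin d)) (hu : ‖u‖ = 1) (hw : ‖w‖ = 1)
    (huw : (inner ℝ u w : ℝ) = 0) (t : ℝ) (ht : 0 < t)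
    (s : ℝ) (hs : s = Real.sqrt (1 + t^2))
    (v : EuclideanSpace ℝ (Fin d)) (hv : v = s⁻¹ • (u + t • w)) :
    ‖v‖ = 1 ∧ ‖v - u‖ ≤ t ∧ (1 ≤ s ∧ s ≤ 1 + t^2/2) ∧
      (∀ z : EuclideanSpace ℝ (Fin d),
        (inner ℝ z v : ℝ) = s⁻¹ * ((inner ℝ z u : ℝ) + t * (inner ℝ z w : ℝ))) := by
  have hsq : s^2 = 1 + t^2 := by rw [hs]; exact Real.sq_sqrt (by positivity)
  have hs0 : 0 ≤ s := by rw [hs]; positivity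
  have hs1 : 1 ≤ s := by nlinarith
  have hs2 : s ≤ 1 + t^2/2 := by nlinarith
  have hsp : 0 < s := by linarith
  have hnorm : ‖u + t • w‖ = s := by
    have h1 : ‖u + t • w‖^2 = 1 + t^2 := by
      rw [norm_add_sq_real, real_inner_smul_right, huw, norm_smul, hu, hw]
      simp [abs_of_pos ht]
    have := congrArg Real.sqrt h1
    rwa [Real.sqrt_sq (norm_nonneg _), ← hs] at this
  have hip : ∀ z : EuclideanSpace ℝ (Fin d),
      (inner ℝ z v : ℝ) = s⁻¹ * ((inner ℝ z u : ℝ) + t * (inner ℝ z w : ℝ)) := by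
    intro z
    rw [hv, real_inner_smul_right, inner_add_right, real_inner_smul_right]
  have hvn : ‖v‖ = 1 := by
    rw [hv, norm_smul, hnorm, Real.norm_eq_abs, abs_of_pos (by positivity)]
    field_simp
  have huv : (inner ℝ u v : ℝ) = s⁻¹ := by
    rw [hip u, real_inner_self_eq_norm_sq, hu, huw]; ring
  have hd : ‖v - u‖ ≤ t := by
    have h5 : s * s⁻¹ = 1 := mul_inv_cancel₀ (ne_of_gt hsp)
    have h2 : ‖v - u‖^2 = 2 - 2 * s⁻¹ := by
      rw [norm_sub_sq_real, hvn, hu, real_inner_comm, huv]; ring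
    have h3 : ‖v - u‖^2 ≤ t^2 := by
      rw [h2]
      nlinarith [mul_nonneg (sq_nonneg t) hs0, sq_nonneg t]
    calc ‖v - u‖ = Real.sqrt (‖v - u‖^2) := (Real.sqrt_sq (norm_nonneg _)).symm
      _ ≤ Real.sqrt (t^2) := Real.sqrt_le_sqrt h3
      _ = t := Real.sqrt_sq ht.le
  exact ⟨hvn, hd, ⟨hs1, hs2⟩, hip⟩

lemma decomp_f {N d : ℕ} (x : Fin N → EuclideanSpace ℝ (Fin d)) (y : Fin N → ℝ)
    (u g v : EuclideanSpace ℝ (Fin d))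
    (hg : g = ∑ n ∈ Finset.univ.filter (fun n => 0 < (inner ℝ (x n) u : ℝ)), y n • x n)
    (hsign : ∀ n, (inner ℝ (x n) u : ℝ) ≠ 0 →
      (0 < (inner ℝ (x n) v : ℝ) ↔ 0 < (inner ℝ (x n) u : ℝ))) :
    ∑ n, y n * max (inner ℝ (x n) v : ℝ) 0
      = (inner ℝ g v : ℝ) + ∑ n ∈ Finset.univ.filter (fun n => (inner ℝ (x n) u : ℝ) = 0),
          y n * max (inner ℝ (x n) v : ℝ) 0 := by
  classical
  have hgv : (inner ℝ g v : ℝ)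
      = ∑ n ∈ Finset.univ.filter (fun n => 0 < (inner ℝ (x n) u : ℝ)),
          y n * (inner ℝ (x n) v : ℝ) := by
    rw [hg, sum_inner]
    exact Finset.sum_congr rfl fun n _ => real_inner_smul_left _ _ _
  rw [hgv, ← Finset.sum_filter_add_sum_filter_not Finset.univ
      (fun n => (inner ℝ (x n) u : ℝ) = 0), add_comm]
  congr 1
  have h1 : ∀ n ∈ Finset.univ.filter (fun n => ¬ (inner ℝ (x n) u : ℝ) = 0),
      y n * max (inner ℝ (x n) v : ℝ) 0
        = if 0 < (inner ℝ (x n) u : ℝ) then y n * (inner ℝ (x n) v : ℝ) else 0 := by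
    intro n hn
    rw [Finset.mem_filter] at hn
    by_cases hp : 0 < (inner ℝ (x n) u : ℝ)
    · rw [if_pos hp]
      have : 0 < (inner ℝ (x n) v : ℝ) := (hsign n hn.2).mpr hp
      rw [max_eq_left this.le]
    · rw [if_neg hp]
      have : ¬ 0 < (inner ℝ (x n) v : ℝ) := fun h => hp ((hsign n hn.2).mp h)
      rw [max_eq_right (not_lt.mp this), mul_zero]
  rw [Finset.sum_congr rfl h1, Finset.sum_ite, Finset.sum_const_zero, add_zero,
    Finset.filter_filter]
  apply Finset.sum_congr _ (fun _ _ => rfl)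
  apply Finset.filter_congr
  intro n _
  simp only [iff_self_and, and_iff_right_iff_imp]
  intro h
  exact ne_of_gt h

lemma term_nonneg {N d : ℕ} (x : Fin N → EuclideanSpace ℝ (Fin d)) (y : Fin N → ℝ)
    (hy : ∀ n, y n = 1 ∨ y n = -1)
    (hsep_same : ∀ n n', y n = y n' → 0 < (inner ℝ (x n) (x n') : ℝ))
    (hsep_diff : ∀ n n', y n ≠ y n' → (inner ℝ (x n) (x n') : ℝ) ≤ 0) :
    ∀ n m, 0 ≤ y n * (y m * (inner ℝ (x n) (x m) : ℝ))
      ∧ (y n = y m → 0 < y n * (y m * (inner ℝ (x n) (x m) : ℝ))) := by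
  intro n m
  by_cases h : y n = y m
  · have h1 : y n * y m = 1 := by rcases hy n with h2 | h2 <;> rw [h2] at h ⊢ <;> rw [← h] <;> ring
    have h2 := hsep_same n m h
    constructor
    · nlinarith
    · intro _; nlinarith
  · have h1 : y n * y m = -1 := by
      rcases hy n with h2 | h2 <;> rcases hy m with h3 | h3 <;>
        rw [h2, h3] at h ⊢ <;> simp_all <;> ring
    have h2 := hsep_diff n m h
    exact ⟨by nlinarith, fun hc => absurd hc h⟩

lemma inner_g {N d : ℕ} (x : Fin N → EuclideanSpace ℝ (Fin d)) (y : Fin N → ℝ)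
    (u g : EuclideanSpace ℝ (Fin d))
    (hg : g = ∑ n ∈ Finset.univ.filter (fun n => 0 < (inner ℝ (x n) u : ℝ)), y n • x n)
    (z : EuclideanSpace ℝ (Fin d)) :
    (inner ℝ z g : ℝ) = ∑ m ∈ Finset.univ.filter (fun m => 0 < (inner ℝ (x m) u : ℝ)),
      y m * (inner ℝ z (x m) : ℝ) := by
  rw [hg, inner_sum]
  exact Finset.sum_congr rfl fun m _ => real_inner_smul_right _ _ _

set_option maxHeartbeats 1000000

/-- Proposition `prop:ortho_cond`: on orthogonally separable data, a unit
vector `u` with `g(u,y) ≠ 0` is a local maximizer of `v ↦ yᵀ(Xv)₊` over the unit ball iff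
`u = g(u,y)/‖g(u,y)‖` (i.e. `cos∠(u, g(u,y)) = 1`), and a local minimizer iff
`u = −g(u,y)/‖g(u,y)‖`. -/
theorem local_extrema_iff_aligned
    {N d : ℕ}
    (x : Fin N → EuclideanSpace ℝ (Fin d)) (y : Fin N → ℝ)
    (hy : ∀ n, y n = 1 ∨ y n = -1)
    (hsep_same : ∀ n n', y n = y n' → 0 < (inner ℝ (x n) (x n') : ℝ))
    (hsep_diff : ∀ n n', y n ≠ y n' → (inner ℝ (x n) (x n') : ℝ) ≤ 0)
    (u : EuclideanSpace ℝ (Fin d)) (hu : ‖u‖ = 1)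
    (g : EuclideanSpace ℝ (Fin d))
    (hg : g = ∑ n ∈ Finset.univ.filter (fun n => 0 < (inner ℝ (x n) u : ℝ)), y n • x n)
    (hgne : g ≠ 0) :
    ((∃ r > (0:ℝ), ∀ v : EuclideanSpace ℝ (Fin d), ‖v‖ ≤ 1 → ‖v - u‖ < r →
        ∑ n, y n * max (inner ℝ (x n) v : ℝ) 0 ≤ ∑ n, y n * max (inner ℝ (x n) u : ℝ) 0) ↔
      u = ‖g‖⁻¹ • g) ∧
    ((∃ r > (0:ℝ), ∀ v : EuclideanSpace ℝ (Fin d), ‖v‖ ≤ 1 → ‖v - u‖ < r →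
        ∑ n, y n * max (inner ℝ (x n) u : ℝ) 0 ≤ ∑ n, y n * max (inner ℝ (x n) v : ℝ) 0) ↔
      u = -(‖g‖⁻¹ • g)) := by
  classical
  have hgpos : 0 < ‖g‖ := norm_pos_iff.mpr hgne
  have hSne : (Finset.univ.filter (fun n => 0 < (inner ℝ (x n) u : ℝ))).Nonempty := by
    rw [Finset.nonempty_iff_ne_empty]
    intro h
    exact hgne (by rw [hg, h, Finset.sum_empty])
  obtain ⟨n₀, hn₀⟩ := hSne
  have huniv : (Finset.univ : Finset (Fin N)).Nonempty := ⟨n₀, Finset.mem_univ n₀⟩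
  have hxpos : ∀ n, 0 < ‖x n‖ := by
    intro n
    have h1 := hsep_same n n rfl
    have h2 : x n ≠ 0 := by intro h; rw [h] at h1; simp at h1
    exact norm_pos_iff.mpr h2
  -- the critical radius
  set r : ℝ := min 1 (Finset.univ.inf' huniv fun n =>
      if (inner ℝ (x n) u : ℝ) = 0 then 1 else |(inner ℝ (x n) u : ℝ)| / ‖x n‖) with hrdef
  clear_value r
  have hrpos : 0 < r := by
    rw [hrdef]
    apply lt_min one_pos
    rw [Finset.lt_inf'_iff]
    intro n _
    by_cases h : (inner ℝ (x n) u : ℝ) = 0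
    · simp [h]
    · rw [if_neg h]; exact div_pos (abs_pos.mpr h) (hxpos n)
  have hrsign : ∀ v : EuclideanSpace ℝ (Fin d), ‖v - u‖ < r →
      ∀ n, (inner ℝ (x n) u : ℝ) ≠ 0 →
      (0 < (inner ℝ (x n) v : ℝ) ↔ 0 < (inner ℝ (x n) u : ℝ)) := by
    intro v hv n hn
    apply sign_iff'
    have h1 : (inner ℝ (x n) v : ℝ) - (inner ℝ (x n) u : ℝ) = (inner ℝ (x n) (v - u) : ℝ) :=
      (inner_sub_right _ _ _).symm
    have hr2 : r ≤ |(inner ℝ (x n) u : ℝ)| / ‖x n‖ := by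
      rw [hrdef]
      refine le_trans (min_le_right _ _)
        (le_trans (Finset.inf'_le _ (Finset.mem_univ n)) ?_)
      rw [if_neg hn]
    calc |(inner ℝ (x n) v : ℝ) - (inner ℝ (x n) u : ℝ)| = |(inner ℝ (x n) (v - u) : ℝ)| := by rw [h1]
      _ ≤ ‖x n‖ * ‖v - u‖ := abs_real_inner_le_norm _ _
      _ < ‖x n‖ * r := mul_lt_mul_of_pos_left hv (hxpos n)
      _ ≤ ‖x n‖ * (|(inner ℝ (x n) u : ℝ)| / ‖x n‖) :=
          mul_le_mul_of_nonneg_left hr2 (hxpos n).le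
      _ = |(inner ℝ (x n) u : ℝ)| := by rw [mul_comm, div_mul_cancel₀ _ (hxpos n).ne']
  have hfval : ∀ v : EuclideanSpace ℝ (Fin d), ‖v - u‖ < r →
      ∑ n, y n * max (inner ℝ (x n) v : ℝ) 0
        = (inner ℝ g v : ℝ) + ∑ n ∈ Finset.univ.filter (fun n => (inner ℝ (x n) u : ℝ) = 0),
            y n * max (inner ℝ (x n) v : ℝ) 0 :=
    fun v hv => decomp_f x y u g v hg (hrsign v hv)
  have hfu : ∑ n, y n * max (inner ℝ (x n) u : ℝ) 0 = (inner ℝ g u : ℝ) := by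
    rw [hfval u (by simpa using hrpos)]
    have hz : ∑ n ∈ Finset.univ.filter (fun n => (inner ℝ (x n) u : ℝ) = 0),
        y n * max (inner ℝ (x n) u : ℝ) 0 = 0 := by
      apply Finset.sum_eq_zero
      intro n hn
      rw [(Finset.mem_filter.mp hn).2]
      simp
    rw [hz, add_zero]
  have hyg : ∀ n, 0 ≤ y n * (inner ℝ (x n) g : ℝ) := by
    intro n
    rw [inner_g x y u g hg (x n), Finset.mul_sum]
    exact Finset.sum_nonneg fun m _ => (term_nonneg x y hy hsep_same hsep_diff n m).1
  have hygs : ∀ n m₀, 0 < (inner ℝ (x m₀) u : ℝ) → y m₀ = y n →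
      0 < y n * (inner ℝ (x n) g : ℝ) := by
    intro n m₀ hm₀ hym
    rw [inner_g x y u g hg (x n), Finset.mul_sum]
    refine Finset.sum_pos' (fun m _ => (term_nonneg x y hy hsep_same hsep_diff n m).1)
      ⟨m₀, Finset.mem_filter.mpr ⟨Finset.mem_univ _, hm₀⟩,
        (term_nonneg x y hy hsep_same hsep_diff n m₀).2 hym.symm⟩
  -- ⇐ for max
  have maxIf : u = ‖g‖⁻¹ • g → (∃ r' > (0:ℝ), ∀ v : EuclideanSpace ℝ (Fin d), ‖v‖ ≤ 1 →
      ‖v - u‖ < r' → ∑ n, y n * max (inner ℝ (x n) v : ℝ) 0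
        ≤ ∑ n, y n * max (inner ℝ (x n) u : ℝ) 0) := by
    intro huu
    have hgu : (inner ℝ g u : ℝ) = ‖g‖ := by
      rw [huu, real_inner_smul_right, real_inner_self_eq_norm_sq]
      field_simp
    have hexm : ∃ m₀, 0 < (inner ℝ (x m₀) u : ℝ) ∧ y m₀ = 1 := by
      by_contra hc
      push_neg at hc
      have h1 : (inner ℝ g u : ℝ) ≤ 0 := by
        rw [real_inner_comm, inner_g x y u g hg u]
        apply Finset.sum_nonpos
        intro m hm
        have hmS := (Finset.mem_filter.mp hm).2
        have hym : y m = -1 := (hy m).resolve_left (hc m hmS)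
        rw [hym, real_inner_comm]
        nlinarith
      rw [hgu] at h1
      linarith
    obtain ⟨m₀, hm₀, hym₀⟩ := hexm
    have hZlab : ∀ n, (inner ℝ (x n) u : ℝ) = 0 → y n = -1 := by
      intro n hn
      rcases hy n with h1 | h1
      · exfalso
        have hzero : (inner ℝ (x n) g : ℝ) = 0 := by
          rw [huu, real_inner_smul_right] at hn
          rcases mul_eq_zero.mp hn with h2 | h2
          · exact absurd h2 (inv_ne_zero hgpos.ne')
          · exact h2
        have hpos := hygs n m₀ hm₀ (by rw [hym₀, h1])
        rw [hzero, mul_zero] at hpos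
        exact lt_irrefl 0 hpos
      · exact h1
    refine ⟨r, hrpos, fun v hvn hvr => ?_⟩
    rw [hfval v hvr, hfu, hgu]
    have hZ : ∑ n ∈ Finset.univ.filter (fun n => (inner ℝ (x n) u : ℝ) = 0),
        y n * max (inner ℝ (x n) v : ℝ) 0 ≤ 0 := by
      apply Finset.sum_nonpos
      intro n hn
      rw [hZlab n (Finset.mem_filter.mp hn).2]
      have := le_max_right (inner ℝ (x n) v : ℝ) 0
      nlinarith
    have hgv : (inner ℝ g v : ℝ) ≤ ‖g‖ := by
      calc (inner ℝ g v : ℝ) ≤ ‖g‖ * ‖v‖ := real_inner_le_norm _ _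
        _ ≤ ‖g‖ * 1 := mul_le_mul_of_nonneg_left hvn hgpos.le
        _ = ‖g‖ := mul_one _
    linarith
  -- ⇒ for max
  have maxOnlyIf : (∃ r' > (0:ℝ), ∀ v : EuclideanSpace ℝ (Fin d), ‖v‖ ≤ 1 →
      ‖v - u‖ < r' → ∑ n, y n * max (inner ℝ (x n) v : ℝ) 0
        ≤ ∑ n, y n * max (inner ℝ (x n) u : ℝ) 0) → u = ‖g‖⁻¹ • g := by
    rintro ⟨r', hr', hmax⟩
    set c : ℝ := (inner ℝ g u : ℝ) with hcdef
    clear_value c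
    -- scaling argument : c ≥ 0
    have hc0 : 0 ≤ c := by
      by_contra hc
      push_neg at hc
      set ε : ℝ := min (min r r') 1 / 2 with hεdef
      clear_value ε
      have hεpos : 0 < ε := by rw [hεdef]; positivity
      have hε1 : ε ≤ 1/2 := by
        rw [hεdef]
        have : min (min r r') 1 ≤ 1 := min_le_right _ _
        linarith
      have hεr : ε < r := by
        rw [hεdef]
        have h1 : min (min r r') 1 ≤ min r r' := min_le_left _ _
        have h2 : min r r' ≤ r := min_le_left _ _
        have h3 : 0 < min (min r r') 1 := lt_min (lt_min hrpos hr') one_pos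
        linarith
      have hεr' : ε < r' := by
        rw [hεdef]
        have h1 : min (min r r') 1 ≤ min r r' := min_le_left _ _
        have h2 : min r r' ≤ r' := min_le_right _ _
        have h3 : 0 < min (min r r') 1 := lt_min (lt_min hrpos hr') one_pos
        linarith
      set v : EuclideanSpace ℝ (Fin d) := (1 - ε) • u with hvdef
      clear_value v
      have hvu : v - u = (-ε) • u := by
        rw [hvdef]; module
      have hvud : ‖v - u‖ = ε := by
        rw [hvu, norm_smul, hu, Real.norm_eq_abs, abs_of_neg (by linarith : (-ε) < 0)]
        ring
      have hvn : ‖v‖ ≤ 1 := by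
        rw [hvdef, norm_smul, hu, Real.norm_eq_abs, abs_of_pos (by linarith : (0:ℝ) < 1 - ε)]
        linarith
      have hfv : ∑ n, y n * max (inner ℝ (x n) v : ℝ) 0 = (1 - ε) * c := by
        rw [hfval v (by rw [hvud]; exact hεr)]
        have hZ : ∑ n ∈ Finset.univ.filter (fun n => (inner ℝ (x n) u : ℝ) = 0),
            y n * max (inner ℝ (x n) v : ℝ) 0 = 0 := by
          apply Finset.sum_eq_zero
          intro n hn
          have h1 : (inner ℝ (x n) v : ℝ) = 0 := by
            rw [hvdef, real_inner_smul_right, (Finset.mem_filter.mp hn).2, mul_zero]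
          rw [h1]
          simp
        rw [hZ, add_zero, hvdef, real_inner_smul_right, ← hcdef]
      have hle := hmax v hvn (by rw [hvud]; exact hεr')
      rw [hfv, hfu] at hle
      nlinarith
    by_cases hh : g - c • u = 0
    · have hgc : g = c • u := by rwa [sub_eq_zero] at hh
      have hcn : c = ‖g‖ := by
        rw [hgc, norm_smul, Real.norm_eq_abs, hu, abs_of_nonneg hc0, mul_one]
      have hcne : c ≠ 0 := by
        intro h
        rw [h] at hcn
        exact hgpos.ne hcn
      rw [← hcn, hgc, smul_smul, inv_mul_cancel₀ hcne, one_smul]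
    · exfalso
      set h : EuclideanSpace ℝ (Fin d) := g - c • u with hhdef
      clear_value h
      have hhn : 0 < ‖h‖ := norm_pos_iff.mpr hh
      have huh : (inner ℝ u h : ℝ) = 0 := by
        rw [hhdef, inner_sub_right, real_inner_smul_right, real_inner_self_eq_norm_sq, hu,
          real_inner_comm, ← hcdef]
        ring
      have hgh : (inner ℝ g h : ℝ) = ‖h‖^2 := by
        have h2 : (inner ℝ h h : ℝ) = (inner ℝ g h : ℝ) - c * (inner ℝ u h : ℝ) := by
          nth_rewrite 1 [hhdef]
          rw [inner_sub_left, real_inner_smul_left]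
        rw [real_inner_self_eq_norm_sq, huh] at h2
        linarith
      set w : EuclideanSpace ℝ (Fin d) := ‖h‖⁻¹ • h with hwdef
      clear_value w
      have hwn : ‖w‖ = 1 := by
        rw [hwdef, norm_smul, Real.norm_eq_abs, abs_of_pos (by positivity)]
        field_simp
      have huw : (inner ℝ u w : ℝ) = 0 := by
        rw [hwdef, real_inner_smul_right, huh, mul_zero]
      have hgw : (inner ℝ g w : ℝ) = ‖h‖ := by
        rw [hwdef, real_inner_smul_right, hgh]
        field_simp
      set t : ℝ := min (min r r' / 2) (‖h‖ / (c + 1)) with htdef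
      clear_value t
      have hcp : (0:ℝ) < c + 1 := by linarith
      have htpos : 0 < t := by
        rw [htdef]; exact lt_min (by positivity) (by positivity)
      have htle : t ≤ min r r' / 2 := by rw [htdef]; exact min_le_left _ _
      have htr : t < r := by
        have h1 : t ≤ min r r' / 2 := htle
        have h2 : min r r' ≤ r := min_le_left _ _
        have h3 : 0 < min r r' := lt_min hrpos hr'
        linarith
      have htr' : t < r' := by
        have h1 : t ≤ min r r' / 2 := htle
        have h2 : min r r' ≤ r' := min_le_right _ _
        have h3 : 0 < min r r' := lt_min hrpos hr'
        linarith
      have hth : t ≤ ‖h‖ / (c + 1) := by rw [htdef]; exact min_le_right _ _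
      set s : ℝ := Real.sqrt (1 + t^2) with hsdef
      clear_value s
      set v : EuclideanSpace ℝ (Fin d) := s⁻¹ • (u + t • w) with hvdef
      clear_value v
      obtain ⟨hvn, hvd, ⟨hs1, hs2⟩, hipv⟩ := perturb u w hu hwn huw t htpos s hsdef v hvdef
      have hsp : 0 < s := lt_of_lt_of_le one_pos hs1
      have hvr : ‖v - u‖ < r := lt_of_le_of_lt hvd htr
      have hvr' : ‖v - u‖ < r' := lt_of_le_of_lt hvd htr'
      -- Z-terms are nonnegative
      have hZ : 0 ≤ ∑ n ∈ Finset.univ.filter (fun n => (inner ℝ (x n) u : ℝ) = 0),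
          y n * max (inner ℝ (x n) v : ℝ) 0 := by
        apply Finset.sum_nonneg
        intro n hn
        have hnz := (Finset.mem_filter.mp hn).2
        rcases hy n with h1 | h1
        · rw [h1, one_mul]
          exact le_max_right _ _
        · have hxg : (inner ℝ (x n) g : ℝ) ≤ 0 := by
            have := hyg n
            rw [h1] at this
            linarith
          have hxh : (inner ℝ (x n) h : ℝ) ≤ 0 := by
            rw [hhdef, inner_sub_right, real_inner_smul_right, hnz, mul_zero, sub_zero]
            exact hxg
          have hxw : (inner ℝ (x n) w : ℝ) ≤ 0 := by
            rw [hwdef, real_inner_smul_right]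
            exact mul_nonpos_of_nonneg_of_nonpos (by positivity) hxh
          have hxv : (inner ℝ (x n) v : ℝ) ≤ 0 := by
            rw [hipv (x n), hnz, zero_add]
            apply mul_nonpos_of_nonneg_of_nonpos (by positivity)
            exact mul_nonpos_of_nonneg_of_nonpos htpos.le hxw
          rw [max_eq_right hxv, mul_zero]
      -- the inner product strictly increases
      have hgv : c < (inner ℝ g v : ℝ) := by
        rw [hipv g, ← hcdef, hgw]
        have key : s * c < c + t * ‖h‖ := by
          have h1 : s * c ≤ c + t^2/2 * c := by nlinarith
          have h2 : t * c / 2 < ‖h‖ := by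
            have h3 : t * (c+1) ≤ ‖h‖ := (le_div_iff₀ hcp).mp hth
            nlinarith
          nlinarith
        have h4 := mul_lt_mul_of_pos_left key (inv_pos.mpr hsp)
        rw [← mul_assoc, inv_mul_cancel₀ hsp.ne', one_mul] at h4
        exact h4
      have hle := hmax v (le_of_eq hvn) hvr'
      rw [hfval v hvr, hfu] at hle
      linarith
  -- ⇐ for min
  have minIf : u = -(‖g‖⁻¹ • g) → (∃ r' > (0:ℝ), ∀ v : EuclideanSpace ℝ (Fin d), ‖v‖ ≤ 1 →
      ‖v - u‖ < r' → ∑ n, y n * max (inner ℝ (x n) u : ℝ) 0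
        ≤ ∑ n, y n * max (inner ℝ (x n) v : ℝ) 0) := by
    intro huu
    have hgu : (inner ℝ g u : ℝ) = -‖g‖ := by
      rw [huu, inner_neg_right, real_inner_smul_right, real_inner_self_eq_norm_sq]
      field_simp
    have hexm : ∃ m₀, 0 < (inner ℝ (x m₀) u : ℝ) ∧ y m₀ = -1 := by
      by_contra hc
      push_neg at hc
      have h1 : 0 ≤ (inner ℝ g u : ℝ) := by
        rw [real_inner_comm, inner_g x y u g hg u]
        apply Finset.sum_nonneg
        intro m hm
        have hmS := (Finset.mem_filter.mp hm).2
        have hym : y m = 1 := (hy m).resolve_right (hc m hmS)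
        rw [hym, one_mul, real_inner_comm]
        exact hmS.le
      rw [hgu] at h1
      linarith
    obtain ⟨m₀, hm₀, hym₀⟩ := hexm
    have hZlab : ∀ n, (inner ℝ (x n) u : ℝ) = 0 → y n = 1 := by
      intro n hn
      rcases hy n with h1 | h1
      · exact h1
      · exfalso
        have hzero : (inner ℝ (x n) g : ℝ) = 0 := by
          rw [huu, inner_neg_right, real_inner_smul_right] at hn
          have h2 := neg_eq_zero.mp hn
          rcases mul_eq_zero.mp h2 with h3 | h3
          · exact absurd h3 (inv_ne_zero hgpos.ne')
          · exact h3
        have hpos := hygs n m₀ hm₀ (by rw [hym₀, h1])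
        rw [hzero, mul_zero] at hpos
        exact lt_irrefl 0 hpos
    refine ⟨r, hrpos, fun v hvn hvr => ?_⟩
    rw [hfval v hvr, hfu, hgu]
    have hZ : 0 ≤ ∑ n ∈ Finset.univ.filter (fun n => (inner ℝ (x n) u : ℝ) = 0),
        y n * max (inner ℝ (x n) v : ℝ) 0 := by
      apply Finset.sum_nonneg
      intro n hn
      rw [hZlab n (Finset.mem_filter.mp hn).2, one_mul]
      exact le_max_right _ _
    have hgv : -‖g‖ ≤ (inner ℝ g v : ℝ) := by
      have habs := abs_real_inner_le_norm g v
      have h2 : ‖g‖ * ‖v‖ ≤ ‖g‖ := by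
        calc ‖g‖ * ‖v‖ ≤ ‖g‖ * 1 := mul_le_mul_of_nonneg_left hvn hgpos.le
          _ = ‖g‖ := mul_one _
      have h3 := (abs_le.mp habs).1
      linarith
    linarith
  -- ⇒ for min
  have minOnlyIf : (∃ r' > (0:ℝ), ∀ v : EuclideanSpace ℝ (Fin d), ‖v‖ ≤ 1 →
      ‖v - u‖ < r' → ∑ n, y n * max (inner ℝ (x n) u : ℝ) 0
        ≤ ∑ n, y n * max (inner ℝ (x n) v : ℝ) 0) → u = -(‖g‖⁻¹ • g) := by
    rintro ⟨r', hr', hmin⟩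
    set c : ℝ := (inner ℝ g u : ℝ) with hcdef
    clear_value c
    have hc0 : c ≤ 0 := by
      by_contra hc
      push_neg at hc
      set ε : ℝ := min (min r r') 1 / 2 with hεdef
      clear_value ε
      have hεpos : 0 < ε := by rw [hεdef]; positivity
      have hε1 : ε ≤ 1/2 := by
        rw [hεdef]
        have : min (min r r') 1 ≤ 1 := min_le_right _ _
        linarith
      have hεr : ε < r := by
        rw [hεdef]
        have h1 : min (min r r') 1 ≤ min r r' := min_le_left _ _
        have h2 : min r r' ≤ r := min_le_left _ _
        have h3 : 0 < min (min r r') 1 := lt_min (lt_min hrpos hr') one_pos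
        linarith
      have hεr' : ε < r' := by
        rw [hεdef]
        have h1 : min (min r r') 1 ≤ min r r' := min_le_left _ _
        have h2 : min r r' ≤ r' := min_le_right _ _
        have h3 : 0 < min (min r r') 1 := lt_min (lt_min hrpos hr') one_pos
        linarith
      set v : EuclideanSpace ℝ (Fin d) := (1 - ε) • u with hvdef
      clear_value v
      have hvu : v - u = (-ε) • u := by
        rw [hvdef]; module
      have hvud : ‖v - u‖ = ε := by
        rw [hvu, norm_smul, hu, Real.norm_eq_abs, abs_of_neg (by linarith : (-ε) < 0)]
        ring
      have hvn : ‖v‖ ≤ 1 := by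
        rw [hvdef, norm_smul, hu, Real.norm_eq_abs, abs_of_pos (by linarith : (0:ℝ) < 1 - ε)]
        linarith
      have hfv : ∑ n, y n * max (inner ℝ (x n) v : ℝ) 0 = (1 - ε) * c := by
        rw [hfval v (by rw [hvud]; exact hεr)]
        have hZ : ∑ n ∈ Finset.univ.filter (fun n => (inner ℝ (x n) u : ℝ) = 0),
            y n * max (inner ℝ (x n) v : ℝ) 0 = 0 := by
          apply Finset.sum_eq_zero
          intro n hn
          have h1 : (inner ℝ (x n) v : ℝ) = 0 := by
            rw [hvdef, real_inner_smul_right, (Finset.mem_filter.mp hn).2, mul_zero]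
          rw [h1]
          simp
        rw [hZ, add_zero, hvdef, real_inner_smul_right, ← hcdef]
      have hle := hmin v hvn (by rw [hvud]; exact hεr')
      rw [hfv, hfu] at hle
      nlinarith
    by_cases hh : g - c • u = 0
    · have hgc : g = c • u := by rwa [sub_eq_zero] at hh
      have hcne : c ≠ 0 := by
        intro h0
        exact hgne (by rw [hgc, h0, zero_smul])
      have hclt : c < 0 := lt_of_le_of_ne hc0 hcne
      have hcn : ‖g‖ = -c := by
        rw [hgc, norm_smul, Real.norm_eq_abs, hu, abs_of_neg hclt, mul_one]
      have hkey : ‖g‖⁻¹ • g = (-1 : ℝ) • u := by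
        rw [hcn, hgc, smul_smul]
        congr 1
        rw [inv_neg, neg_mul, inv_mul_cancel₀ hcne]
      rw [hkey]
      simp
    · exfalso
      set h : EuclideanSpace ℝ (Fin d) := g - c • u with hhdef
      clear_value h
      have hhn : 0 < ‖h‖ := norm_pos_iff.mpr hh
      have huh : (inner ℝ u h : ℝ) = 0 := by
        rw [hhdef, inner_sub_right, real_inner_smul_right, real_inner_self_eq_norm_sq, hu,
          real_inner_comm, ← hcdef]
        ring
      have hgh : (inner ℝ g h : ℝ) = ‖h‖^2 := by
        have h2 : (inner ℝ h h : ℝ) = (inner ℝ g h : ℝ) - c * (inner ℝ u h : ℝ) := by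
          nth_rewrite 1 [hhdef]
          rw [inner_sub_left, real_inner_smul_left]
        rw [real_inner_self_eq_norm_sq, huh] at h2
        linarith
      set w : EuclideanSpace ℝ (Fin d) := -(‖h‖⁻¹ • h) with hwdef
      clear_value w
      have hwn : ‖w‖ = 1 := by
        rw [hwdef, norm_neg, norm_smul, Real.norm_eq_abs, abs_of_pos (by positivity)]
        field_simp
      have huw : (inner ℝ u w : ℝ) = 0 := by
        rw [hwdef, inner_neg_right, real_inner_smul_right, huh, mul_zero, neg_zero]
      have hgw : (inner ℝ g w : ℝ) = -‖h‖ := by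
        rw [hwdef, inner_neg_right, real_inner_smul_right, hgh]
        field_simp
      have hcp : (0:ℝ) < 1 - c := by linarith
      set t : ℝ := min (min r r' / 2) (‖h‖ / (1 - c)) with htdef
      clear_value t
      have htpos : 0 < t := by
        rw [htdef]; exact lt_min (by positivity) (by positivity)
      have htle : t ≤ min r r' / 2 := by rw [htdef]; exact min_le_left _ _
      have htr : t < r := by
        have h2 : min r r' ≤ r := min_le_left _ _
        have h3 : 0 < min r r' := lt_min hrpos hr'
        linarith
      have htr' : t < r' := by
        have h2 : min r r' ≤ r' := min_le_right _ _
        have h3 : 0 < min r r' := lt_min hrpos hr'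
        linarith
      have hth : t ≤ ‖h‖ / (1 - c) := by rw [htdef]; exact min_le_right _ _
      set s : ℝ := Real.sqrt (1 + t^2) with hsdef
      clear_value s
      set v : EuclideanSpace ℝ (Fin d) := s⁻¹ • (u + t • w) with hvdef
      clear_value v
      obtain ⟨hvn, hvd, ⟨hs1, hs2⟩, hipv⟩ := perturb u w hu hwn huw t htpos s hsdef v hvdef
      have hsp : 0 < s := lt_of_lt_of_le one_pos hs1
      have hvr : ‖v - u‖ < r := lt_of_le_of_lt hvd htr
      have hvr' : ‖v - u‖ < r' := lt_of_le_of_lt hvd htr'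
      -- Z-terms are nonpositive
      have hZ : ∑ n ∈ Finset.univ.filter (fun n => (inner ℝ (x n) u : ℝ) = 0),
          y n * max (inner ℝ (x n) v : ℝ) 0 ≤ 0 := by
        apply Finset.sum_nonpos
        intro n hn
        have hnz := (Finset.mem_filter.mp hn).2
        rcases hy n with h1 | h1
        · have hxg : 0 ≤ (inner ℝ (x n) g : ℝ) := by
            have := hyg n
            rw [h1, one_mul] at this
            exact this
          have hxh : 0 ≤ (inner ℝ (x n) h : ℝ) := by
            rw [hhdef, inner_sub_right, real_inner_smul_right, hnz, mul_zero, sub_zero]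
            exact hxg
          have hxw : (inner ℝ (x n) w : ℝ) ≤ 0 := by
            rw [hwdef, inner_neg_right, real_inner_smul_right]
            simp only [neg_nonpos]
            exact mul_nonneg (by positivity) hxh
          have hxv : (inner ℝ (x n) v : ℝ) ≤ 0 := by
            rw [hipv (x n), hnz, zero_add]
            apply mul_nonpos_of_nonneg_of_nonpos (by positivity)
            exact mul_nonpos_of_nonneg_of_nonpos htpos.le hxw
          rw [max_eq_right hxv, mul_zero]
        · have hm := le_max_right (inner ℝ (x n) v : ℝ) 0
          nlinarith [le_max_right (inner ℝ (x n) v : ℝ) 0, h1]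
      -- the inner product strictly decreases
      have hgv : (inner ℝ g v : ℝ) < c := by
        rw [hipv g, ← hcdef, hgw]
        have hrw : c + t * -‖h‖ = c - t * ‖h‖ := by ring
        rw [hrw]
        have key : c - t * ‖h‖ < s * c := by
          have h3 : t * (1 - c) ≤ ‖h‖ := (le_div_iff₀ hcp).mp hth
          nlinarith
        have h4 := mul_lt_mul_of_pos_left key (inv_pos.mpr hsp)
        rw [← mul_assoc, inv_mul_cancel₀ hsp.ne', one_mul] at h4
        exact h4
      have hle := hmin v (le_of_eq hvn) hvr'
      rw [hfval v hvr, hfu] at hle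
      linarith
  exact ⟨⟨maxOnlyIf, maxIf⟩, ⟨minOnlyIf, minIf⟩⟩
end
end

section
/- Let λ ∈ ℝ^N and let u_0 ∈ ℝ^d satisfy g(u_0,λ) ≠ 0 and u_0 = g(u_0,λ)/‖g(u_0,λ)‖₂. Let σ ∈ {−1,0,1}^N be the entrywise sign pattern σ_n = sign(x_nᵀu_0). If ‖g(σ',λ)‖₂ = ‖g(σ,λ)‖₂ for every σ' ∈ {−1,1}^N with σ'_n = σ_n for all n with σ_n ≠ 0, then u_0 is a local maximizer of u ↦ λᵀ(Xu)_+ over the closed unit ball B = {u ∈ ℝ^d : ‖u‖₂ ≤ 1}. -/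
open scoped BigOperators

noncomputable section

/-- Lemma `lem:ortho_max`: if `u₀ = g(u₀,λ)/‖g(u₀,λ)‖` and every open sign
pattern `σ'` refining `σ = sign(Xu₀)` gives `‖g(σ',λ)‖ = ‖g(σ,λ)‖`, then `u₀` is a local
maximizer of `u ↦ λᵀ(Xu)₊` over the unit ball. -/
theorem local_max_of_refinement_norm_eq
    {N d : ℕ}
    (x : Fin N → EuclideanSpace ℝ (Fin d))
    (lam : Fin N → ℝ)
    (u0 : EuclideanSpace ℝ (Fin d))
    (g0 : EuclideanSpace ℝ (Fin d))
    (hg0 : g0 = ∑ n ∈ Finset.univ.filter (fun n => 0 < (inner ℝ (x n) u0 : ℝ)), lam n • x n)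
    (hg0ne : g0 ≠ 0)
    (hu0 : u0 = ‖g0‖⁻¹ • g0)
    (sigma : Fin N → ℝ)
    (hsigma : ∀ n, sigma n = Real.sign (inner ℝ (x n) u0 : ℝ))
    (hrefine : ∀ sigma' : Fin N → ℝ,
      (∀ n, sigma' n = 1 ∨ sigma' n = -1) →
      (∀ n, sigma n ≠ 0 → sigma' n = sigma n) →
      ‖∑ n ∈ Finset.univ.filter (fun n => sigma' n = 1), lam n • x n‖ = ‖g0‖) :
    ∃ r > (0:ℝ), ∀ u : EuclideanSpace ℝ (Fin d), ‖u‖ ≤ 1 → ‖u - u0‖ < r →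
      ∑ n, lam n * max (inner ℝ (x n) u : ℝ) 0 ≤
        ∑ n, lam n * max (inner ℝ (x n) u0 : ℝ) 0 := by
  classical
  -- continuity of each linear functional
  have hcont : ∀ n, Continuous (fun u : EuclideanSpace ℝ (Fin d) => (inner ℝ (x n) u : ℝ)) :=
    fun n => (innerSL ℝ (x n)).continuous
  have hev : ∀ᶠ u in nhds u0, ∀ n,
      (0 < (inner ℝ (x n) u0 : ℝ) → 0 < (inner ℝ (x n) u : ℝ)) ∧
      ((inner ℝ (x n) u0 : ℝ) < 0 → (inner ℝ (x n) u : ℝ) < 0) := by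
    rw [Filter.eventually_all]
    intro n
    rcases lt_trichotomy (0 : ℝ) (inner ℝ (x n) u0 : ℝ) with h | h | h
    · have h1 : ∀ᶠ u in nhds u0, 0 < (inner ℝ (x n) u : ℝ) :=
        ((hcont n).tendsto u0).eventually (eventually_gt_nhds h)
      filter_upwards [h1] with u hu
      exact ⟨fun _ => hu, fun hc => absurd h (not_lt.mpr hc.le)⟩
    · filter_upwards with u
      exact ⟨fun hc => absurd h.symm (ne_of_gt hc), fun hc => absurd h (ne_of_gt hc)⟩
    · have h1 : ∀ᶠ u in nhds u0, (inner ℝ (x n) u : ℝ) < 0 :=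
        ((hcont n).tendsto u0).eventually (eventually_lt_nhds h)
      filter_upwards [h1] with u hu
      exact ⟨fun hc => absurd hc (not_lt.mpr h.le), fun _ => hu⟩
  obtain ⟨r, hr, hball⟩ := Metric.eventually_nhds_iff.mp hev
  refine ⟨r, hr, ?_⟩
  intro u hu1 hur
  have hsign := hball (show dist u u0 < r by rwa [dist_eq_norm])
  -- the RHS equals ‖g0‖
  have hg0norm : ‖g0‖ ≠ 0 := norm_ne_zero_iff.mpr hg0ne
  have hRHS : ∑ n, lam n * max (inner ℝ (x n) u0 : ℝ) 0 = ‖g0‖ := by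
    have h1 : ∑ n, lam n * max (inner ℝ (x n) u0 : ℝ) 0
        = (inner ℝ g0 u0 : ℝ) := by
      rw [hg0, sum_inner]
      rw [← Finset.sum_filter_add_sum_filter_not Finset.univ
        (fun n => 0 < (inner ℝ (x n) u0 : ℝ)) (fun n => lam n * max (inner ℝ (x n) u0 : ℝ) 0)]
      have hz : ∑ n ∈ Finset.univ.filter (fun n => ¬ 0 < (inner ℝ (x n) u0 : ℝ)),
          lam n * max (inner ℝ (x n) u0 : ℝ) 0 = 0 := by
        apply Finset.sum_eq_zero
        intro n hn
        simp only [Finset.mem_filter] at hn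
        rw [max_eq_right (not_lt.mp hn.2), mul_zero]
      rw [hz, add_zero]
      apply Finset.sum_congr rfl
      intro n hn
      simp only [Finset.mem_filter] at hn
      rw [real_inner_smul_left, max_eq_left hn.2.le]
    rw [h1, hu0, real_inner_smul_right, real_inner_self_eq_norm_sq]
    field_simp
  rw [hRHS]
  -- choose the refined sign pattern
  set sigma' : Fin N → ℝ := fun n =>
    if 0 < (inner ℝ (x n) u0 : ℝ) then 1
    else if (inner ℝ (x n) u0 : ℝ) < 0 then -1
    else if 0 ≤ lam n * (inner ℝ (x n) u : ℝ) then 1 else -1 with hsigma'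
  have hs1 : ∀ n, sigma' n = 1 ∨ sigma' n = -1 := by
    intro n
    simp only [hsigma']
    split_ifs <;> simp
  have hs2 : ∀ n, sigma n ≠ 0 → sigma' n = sigma n := by
    intro n hn
    rw [hsigma] at hn ⊢
    rcases lt_trichotomy (0 : ℝ) (inner ℝ (x n) u0 : ℝ) with h | h | h
    · simp only [hsigma', if_pos h, Real.sign_of_pos h]
    · exact absurd (by rw [← h, Real.sign_zero]) hn
    · simp only [hsigma', if_neg (not_lt.mpr h.le), if_pos h, Real.sign_of_neg h]
  have hkey : ∑ n, lam n * max (inner ℝ (x n) u : ℝ) 0 ≤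
      (inner ℝ (∑ n ∈ Finset.univ.filter (fun n => sigma' n = 1), lam n • x n) u : ℝ) := by
    rw [sum_inner]
    have heq : ∀ n ∈ Finset.univ.filter (fun n => sigma' n = 1),
        (inner ℝ (lam n • x n) u : ℝ) = lam n * (inner ℝ (x n) u : ℝ) := by
      intro n _; rw [real_inner_smul_left]
    rw [Finset.sum_congr rfl heq, Finset.sum_filter]
    apply Finset.sum_le_sum
    intro n _
    rcases lt_trichotomy (0 : ℝ) (inner ℝ (x n) u0 : ℝ) with h | h | h
    · have hpos : 0 < (inner ℝ (x n) u : ℝ) := (hsign n).1 h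
      have : sigma' n = 1 := by simp only [hsigma', if_pos h]
      rw [if_pos this, max_eq_left hpos.le]
    · by_cases hl : 0 ≤ lam n * (inner ℝ (x n) u : ℝ)
      · have : sigma' n = 1 := by
          simp only [hsigma', ← h, lt_irrefl, if_false, if_pos hl]
        rw [if_pos this]
        rcases le_or_gt (inner ℝ (x n) u : ℝ) 0 with hz | hz
        · rw [max_eq_right hz, mul_zero]; exact hl
        · rw [max_eq_left hz.le]
      · have : sigma' n = -1 := by
          simp only [hsigma', ← h, lt_irrefl, if_false, if_neg hl]
        rw [if_neg (by rw [this]; norm_num)]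
        rcases le_or_gt (inner ℝ (x n) u : ℝ) 0 with hz | hz
        · rw [max_eq_right hz, mul_zero]
        · rw [max_eq_left hz.le]; exact (not_le.mp hl).le
    · have hneg : (inner ℝ (x n) u : ℝ) < 0 := (hsign n).2 h
      have : sigma' n = -1 := by
        simp only [hsigma', if_neg (not_lt.mpr h.le), if_pos h]
      rw [if_neg (by rw [this]; norm_num), max_eq_right hneg.le, mul_zero]
  calc ∑ n, lam n * max (inner ℝ (x n) u : ℝ) 0
      ≤ (inner ℝ (∑ n ∈ Finset.univ.filter (fun n => sigma' n = 1), lam n • x n) u : ℝ) := hkey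
    _ ≤ ‖∑ n ∈ Finset.univ.filter (fun n => sigma' n = 1), lam n • x n‖ * ‖u‖ :=
        real_inner_le_norm _ _
    _ ≤ ‖∑ n ∈ Finset.univ.filter (fun n => sigma' n = 1), lam n • x n‖ * 1 := by
        apply mul_le_mul_of_nonneg_left hu1 (norm_nonneg _)
    _ = ‖g0‖ := by rw [mul_one, hrefine sigma' hs1 hs2]
end
end

section
/- Assume the dataset (X,y) is orthogonally separable and let λ ∈ ℝ^N satisfy y_nλ_n ≥ 0 for all n. Suppose u_0 ∈ ℝ^d satisfies g(u_0,λ) ≠ 0 and u_0 = g(u_0,λ)/‖g(u_0,λ)‖₂, where g(u,λ) = Σ_{n : x_nᵀu > 0} λ_n x_n. Then for every n ∈ {1,…,N}: x_nᵀu_0 > 0 if and only if y_n = 1. -/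
open scoped BigOperators

noncomputable section

/-- on orthogonally separable data with sign-consistent `λ`, a stationary
direction `u₀ = g(u₀,λ)/‖g(u₀,λ)‖` activates exactly the positively labeled points:
`x_nᵀu₀ > 0 ↔ y_n = 1`. -/
theorem stationary_direction_activates_positive_class
    {N d : ℕ}
    (x : Fin N → EuclideanSpace ℝ (Fin d)) (y : Fin N → ℝ)
    (hy : ∀ n, y n = 1 ∨ y n = -1)
    (hsep_same : ∀ n n', y n = y n' → 0 < (inner ℝ (x n) (x n') : ℝ))
    (hsep_diff : ∀ n n', y n ≠ y n' → (inner ℝ (x n) (x n') : ℝ) ≤ 0)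
    (lam : Fin N → ℝ)
    (hlam_sign : ∀ n, 0 ≤ y n * lam n)
    (u0 : EuclideanSpace ℝ (Fin d))
    (g0 : EuclideanSpace ℝ (Fin d))
    (hg0 : g0 = ∑ n ∈ Finset.univ.filter (fun n => 0 < (inner ℝ (x n) u0 : ℝ)), lam n • x n)
    (hg0ne : g0 ≠ 0)
    (hu0 : u0 = ‖g0‖⁻¹ • g0) :
    ∀ n, 0 < (inner ℝ (x n) u0 : ℝ) ↔ y n = 1 := by
  set A := Finset.univ.filter (fun n => 0 < (inner ℝ (x n) u0 : ℝ)) with hA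
  have hnorm : 0 < ‖g0‖ := norm_pos_iff.mpr hg0ne
  have hinner : ∀ n, (inner ℝ (x n) u0 : ℝ) = ‖g0‖⁻¹ * inner ℝ (x n) g0 := by
    intro n; rw [hu0, real_inner_smul_right]
  have hgsum : ∀ n, (inner ℝ (x n) g0 : ℝ) = ∑ m ∈ A, lam m * inner ℝ (x n) (x m) := by
    intro n; rw [hg0, inner_sum]; exact Finset.sum_congr rfl fun m _ => real_inner_smul_right _ _ _
  have hApos : ∀ m ∈ A, y m = 1 := by
    intro m hm
    by_contra h
    have hym : y m = -1 := (hy m).resolve_left h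
    have h1 : (0:ℝ) < inner ℝ (x m) u0 := (Finset.mem_filter.mp hm).2
    have h2 : (inner ℝ (x m) g0 : ℝ) ≤ 0 := by
      rw [hgsum]
      apply Finset.sum_nonpos
      intro m' _
      rcases hy m' with h' | h'
      · have hl : 0 ≤ lam m' := by have := hlam_sign m'; rw [h'] at this; linarith
        have hi : (inner ℝ (x m) (x m') : ℝ) ≤ 0 :=
          hsep_diff m m' (by rw [hym, h']; norm_num)
        exact mul_nonpos_of_nonneg_of_nonpos hl hi
      · have hl : lam m' ≤ 0 := by have := hlam_sign m'; rw [h'] at this; linarith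
        have hi : (0:ℝ) < inner ℝ (x m) (x m') := hsep_same m m' (by rw [hym, h'])
        exact mul_nonpos_of_nonpos_of_nonneg hl hi.le
    rw [hinner] at h1
    nlinarith [inv_pos.mpr hnorm]
  have hlamA : ∀ m ∈ A, 0 ≤ lam m := by
    intro m hm; have := hlam_sign m; rw [hApos m hm] at this; linarith
  have hex : ∃ m ∈ A, 0 < lam m := by
    by_contra h
    push_neg at h
    apply hg0ne
    rw [hg0]
    apply Finset.sum_eq_zero
    intro m hm
    have : lam m = 0 := le_antisymm (h m hm) (hlamA m hm)
    simp [this]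
  obtain ⟨m0, hm0A, hm0⟩ := hex
  intro n
  constructor
  · intro hn
    have hnA : n ∈ A := Finset.mem_filter.mpr ⟨Finset.mem_univ n, hn⟩
    exact hApos n hnA
  · intro hyn
    have hpos : (0:ℝ) < inner ℝ (x n) g0 := by
      rw [hgsum]
      apply Finset.sum_pos'
      · intro m hm
        exact mul_nonneg (hlamA m hm) (hsep_same n m (by rw [hyn, hApos m hm])).le
      · exact ⟨m0, hm0A, mul_pos hm0 (hsep_same n m0 (by rw [hyn, hApos m0 hm0A]))⟩
    rw [hinner]
    exact mul_pos (inv_pos.mpr hnorm) hpos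
end
end
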